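/- arXiv:2004.05833 — 3 statements merged into one kernel-verified Lean document; each statement's English description precedes it below -/
import Mathlib

section
/- For every parameter κ = (κ_1,…,κ_L) with L ≥ 2, every valid log-Sobolev constant of the multislice Ω_κ is at least log(n/κ_min): if τ ∈ ℝ satisfies Ent_κ(f) ≤ τ·𝔈_κ(√f, √f) for all f : Ω_κ → [0,∞), then τ ≥ log(n/κ_min). -/
open Finset

namespace Multislice

/-- The multislice `Ω_κ`: sequences of length `n` with values in `Fin L`
in which color `ℓ` appears exactly `κ ℓ` times. -/
def slice (L n : ℕ) (κ : Fin L → ℕ) : Finset (Fin n → Fin L) :=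
  Finset.univ.filter fun ω => ∀ ℓ, (Finset.univ.filter fun i => ω i = ℓ).card = κ ℓ

/-- Average of `f` with respect to the uniform distribution on `Ω`. -/
noncomputable def expect {L n : ℕ} (Ω : Finset (Fin n → Fin L))
    (f : (Fin n → Fin L) → ℝ) : ℝ :=
  (∑ ω ∈ Ω, f ω) / Ω.card

/-- Discrete gradient `(∇^{ij} f)(ω) = f(ω^{ij}) - f(ω)`. -/
noncomputable def grad {L n : ℕ} (i j : Fin n) (f : (Fin n → Fin L) → ℝ)
    (ω : Fin n → Fin L) : ℝ :=
  f (ω ∘ Equiv.swap i j) - f ω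

/-- The Dirichlet form `𝔈_κ(f,g) = (1/(2n)) Σ_{i<j} E[(∇^{ij}f)(∇^{ij}g)]`. -/
noncomputable def dirichlet {L n : ℕ} (Ω : Finset (Fin n → Fin L))
    (f g : (Fin n → Fin L) → ℝ) : ℝ :=
  (1 / (2 * (n : ℝ))) *
    ∑ p ∈ Finset.univ.filter (fun p : Fin n × Fin n => p.1 < p.2),
      expect Ω fun ω => grad p.1 p.2 f ω * grad p.1 p.2 g ω

/-- The weighted Dirichlet form `𝔈^G_κ(f,g) = (1/2) Σ_{i<j} G_{ij} E[(∇^{ij}f)(∇^{ij}g)]`. -/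
noncomputable def wDirichlet {L n : ℕ} (G : Fin n → Fin n → ℝ)
    (Ω : Finset (Fin n → Fin L)) (f g : (Fin n → Fin L) → ℝ) : ℝ :=
  (1 / 2) *
    ∑ p ∈ Finset.univ.filter (fun p : Fin n × Fin n => p.1 < p.2),
      G p.1 p.2 * expect Ω fun ω => grad p.1 p.2 f ω * grad p.1 p.2 g ω

/-- Entropy `Ent(f) = E[f log f] - E[f] log E[f]` (note `Real.log 0 = 0`). -/
noncomputable def entropy {L n : ℕ} (Ω : Finset (Fin n → Fin L))
    (f : (Fin n → Fin L) → ℝ) : ℝ :=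
  expect Ω (fun ω => f ω * Real.log (f ω)) - expect Ω f * Real.log (expect Ω f)

/-- Variance `Var(f) = E[f²] - (E[f])²`. -/
noncomputable def variance {L n : ℕ} (Ω : Finset (Fin n → Fin L))
    (f : (Fin n → Fin L) → ℝ) : ℝ :=
  expect Ω (fun ω => f ω ^ 2) - (expect Ω f) ^ 2

/-- The edge boundary `∂A` of `A ⊆ Ω`: edges (recorded as pairs with first endpoint
in `A` and second endpoint in `Ω \ A`) between `A` and its complement, where two
states are adjacent when they differ in exactly two coordinates. -/
def edgeBoundary {L n : ℕ} (Ω A : Finset (Fin n → Fin L)) :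
    Finset ((Fin n → Fin L) × (Fin n → Fin L)) :=
  (A ×ˢ (Ω \ A)).filter fun p => (Finset.univ.filter fun i => p.1 i ≠ p.2 i).card = 2

/-- The `ℓ`-colored region `ξ_ℓ(ω) = {i : ω i = ℓ}`. -/
def xi {L n : ℕ} (ℓ : Fin L) (ω : Fin n → Fin L) : Finset (Fin n) :=
  Finset.univ.filter fun i => ω i = ℓ

/-- The parameter `κ^{∖ℓ}` obtained from `κ` by removing the `ℓ`-th entry. -/
def removeIdx {L : ℕ} (κ : Fin L → ℕ) (ℓ : Fin L) (m : Fin (L - 1)) : ℕ :=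
  if (m : ℕ) < (ℓ : ℕ) then κ ⟨m, by have := m.isLt; omega⟩
  else κ ⟨(m : ℕ) + 1, by have := m.isLt; omega⟩

lemma mem_slice_iff {L n : ℕ} {κ : Fin L → ℕ} {ω : Fin n → Fin L} :
    ω ∈ slice L n κ ↔ ∀ ℓ, (Finset.univ.filter fun i => ω i = ℓ).card = κ ℓ := by
  simp [slice]

lemma slice_perm {L n : ℕ} {κ : Fin L → ℕ} {ω : Fin n → Fin L}
    (hω : ω ∈ slice L n κ) (σ : Equiv.Perm (Fin n)) : ω ∘ σ ∈ slice L n κ := by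
  rw [mem_slice_iff] at hω ⊢
  intro ℓ
  rw [← hω ℓ]
  apply Finset.card_bij (fun i _ => σ i)
  · intro a ha; simp only [Finset.mem_filter, Finset.mem_univ, true_and] at ha ⊢
    simpa using ha
  · intro a _ b _ h; exact σ.injective h
  · intro b hb
    refine ⟨σ.symm b, ?_, by simp⟩
    simp only [Finset.mem_filter, Finset.mem_univ, true_and, Function.comp] at hb ⊢
    simpa using hb

lemma slice_nonempty {L n : ℕ} (κ : Fin L → ℕ) (hn : n = ∑ ℓ, κ ℓ) :
    (slice L n κ).Nonempty := by
  have hcard : Fintype.card (Σ ℓ : Fin L, Fin (κ ℓ)) = n := by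
    simp [hn]
  obtain ⟨e⟩ : Nonempty (Fin n ≃ Σ ℓ : Fin L, Fin (κ ℓ)) :=
    ⟨Fintype.equivOfCardEq (by simp [hcard])⟩
  refine ⟨fun i => (e i).1, ?_⟩
  rw [mem_slice_iff]
  intro ℓ
  have h1 : (Finset.univ.filter fun i : Fin n => (e i).1 = ℓ).card
      = (Finset.univ.filter fun s : Σ ℓ' : Fin L, Fin (κ ℓ') => s.1 = ℓ).card := by
    apply Finset.card_bij (fun i _ => e i)
    · intro a ha; simp only [Finset.mem_filter, Finset.mem_univ, true_and] at ha ⊢; exact ha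
    · intro a _ b _ h; exact e.injective h
    · intro b hb; exact ⟨e.symm b, by simp only [Finset.mem_filter, Finset.mem_univ,
        true_and, Equiv.apply_symm_apply] at hb ⊢; exact hb, by simp⟩
  rw [h1, Finset.card_filter, ← Finset.univ_sigma_univ, Finset.sum_sigma]
  simp [apply_ite Finset.card, Finset.sum_ite_eq']

lemma fiber_count {L n : ℕ} {κ : Fin L → ℕ} (i₀ : Fin n) (ℓ : Fin L) :
    n * ((slice L n κ).filter fun ω => ω i₀ = ℓ).card
      = κ ℓ * (slice L n κ).card := by
  classical
  have hfib : ∀ i : Fin n, ((slice L n κ).filter fun ω => ω i = ℓ).card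
      = ((slice L n κ).filter fun ω => ω i₀ = ℓ).card := by
    intro i
    apply Finset.card_bij (fun ω _ => ω ∘ Equiv.swap i i₀)
    · intro ω hω
      simp only [Finset.mem_filter] at hω ⊢
      exact ⟨slice_perm hω.1 _, by simpa [Equiv.swap_apply_right] using hω.2⟩
    · intro a _ b _ h
      funext x
      have := congrFun h (Equiv.swap i i₀ x)
      simpa [Function.comp, Equiv.swap_apply_self] using this
    · intro b hb
      simp only [Finset.mem_filter] at hb
      refine ⟨b ∘ Equiv.swap i i₀, ?_, ?_⟩
      · simp only [Finset.mem_filter]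
        exact ⟨slice_perm hb.1 _, by simpa [Equiv.swap_apply_left] using hb.2⟩
      · funext x; simp [Function.comp, Equiv.swap_apply_self]
  have hsum : ∑ i : Fin n, ((slice L n κ).filter fun ω => ω i = ℓ).card
      = κ ℓ * (slice L n κ).card := by
    have h1 : ∀ i : Fin n, ((slice L n κ).filter fun ω => ω i = ℓ).card
        = ∑ ω ∈ slice L n κ, if ω i = ℓ then 1 else 0 := fun i => Finset.card_filter _ _
    rw [Finset.sum_congr rfl fun i _ => h1 i, Finset.sum_comm]
    rw [Finset.sum_congr rfl fun ω hω => ?_, Finset.sum_const, smul_eq_mul, mul_comm]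
    have := (mem_slice_iff.mp hω) ℓ
    rw [← Finset.card_filter]
    exact this
  calc n * ((slice L n κ).filter fun ω => ω i₀ = ℓ).card
      = ∑ _i : Fin n, ((slice L n κ).filter fun ω => ω i₀ = ℓ).card := by
        rw [Finset.sum_const, smul_eq_mul, Finset.card_univ, Fintype.card_fin]
    _ = ∑ i : Fin n, ((slice L n κ).filter fun ω => ω i = ℓ).card :=
        Finset.sum_congr rfl fun i _ => (hfib i).symm
    _ = κ ℓ * (slice L n κ).card := hsum

lemma sum_pairs_pivot {n : ℕ} (F : Fin n → Fin n → ℝ) (i₀ : Fin n)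
    (hsymm : ∀ i j, F i j = F j i) (hdiag : ∀ i, F i i = 0)
    (hzero : ∀ i j, i ≠ i₀ → j ≠ i₀ → F i j = 0) :
    ∑ p ∈ Finset.univ.filter (fun p : Fin n × Fin n => p.1 < p.2), F p.1 p.2
      = ∑ j, F i₀ j := by
  classical
  have h1 : ∑ p ∈ Finset.univ.filter (fun p : Fin n × Fin n => p.2 < p.1), F p.1 p.2
      = ∑ p ∈ Finset.univ.filter (fun p : Fin n × Fin n => p.1 < p.2), F p.1 p.2 := by
    apply Finset.sum_nbij' (i := Prod.swap) (j := Prod.swap)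
    · intro p hp; simp at hp ⊢; exact hp
    · intro p hp; simp at hp ⊢; exact hp
    · intro p _; simp
    · intro p _; simp
    · intro p _; exact hsymm p.1 p.2
  have h3 : ∑ p ∈ Finset.univ.filter (fun p : Fin n × Fin n => ¬ p.1 < p.2), F p.1 p.2
      = ∑ p ∈ Finset.univ.filter (fun p : Fin n × Fin n => p.2 < p.1), F p.1 p.2 := by
    symm
    apply Finset.sum_subset
    · intro p hp; simp only [Finset.mem_filter, Finset.mem_univ, true_and] at hp ⊢
      exact not_lt_of_gt hp
    · intro p hp hnp
      simp only [Finset.mem_filter, Finset.mem_univ, true_and] at hp hnp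
      have : p.1 = p.2 := le_antisymm (le_of_not_gt hnp) (le_of_not_gt hp)
      rw [this]; exact hdiag _
  have h2 : ∑ p : Fin n × Fin n, F p.1 p.2
      = 2 * ∑ p ∈ Finset.univ.filter (fun p : Fin n × Fin n => p.1 < p.2), F p.1 p.2 := by
    rw [← Finset.sum_filter_add_sum_filter_not Finset.univ
      (fun p : Fin n × Fin n => p.1 < p.2), h3, h1]
    ring
  have hrow : ∀ i, i ≠ i₀ → ∑ j, F i j = F i i₀ := by
    intro i hi
    apply Finset.sum_eq_single i₀
    · intro j _ hj; exact hzero i j hi hj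
    · simp
  have h4 : ∑ p : Fin n × Fin n, F p.1 p.2 = 2 * ∑ j, F i₀ j := by
    rw [Fintype.sum_prod_type]
    calc ∑ i, ∑ j, F i j
        = ∑ j, F i₀ j + ∑ i ∈ Finset.univ.erase i₀, ∑ j, F i j :=
          (Finset.add_sum_erase _ _ (Finset.mem_univ i₀)).symm
      _ = ∑ j, F i₀ j + ∑ i ∈ Finset.univ.erase i₀, F i₀ i := by
          congr 1
          exact Finset.sum_congr rfl fun i hi => by
            rw [hrow i (Finset.ne_of_mem_erase hi), hsymm]
      _ = ∑ j, F i₀ j + (∑ i, F i₀ i - F i₀ i₀) := by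
          rw [Finset.sum_erase_eq_sub (Finset.mem_univ i₀)]
      _ = 2 * ∑ j, F i₀ j := by rw [hdiag]; ring
  linarith [h2, h4]

set_option maxHeartbeats 1000000 in
/-- every valid log-Sobolev constant of the multislice is at
least `log(n/κ_min)`. -/
theorem multislice_logSobolev_lower
    (L : ℕ) (hL : 2 ≤ L) (κ : Fin L → ℕ) (hκ : ∀ ℓ, 0 < κ ℓ)
    (n : ℕ) (hn : n = ∑ ℓ, κ ℓ)
    (κmin : ℕ) (hmin : ∀ ℓ, κmin ≤ κ ℓ) (hmem : ∃ ℓ, κ ℓ = κmin)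
    (τ : ℝ)
    (hτ : ∀ f : (Fin n → Fin L) → ℝ, (∀ ω, 0 ≤ f ω) →
      entropy (slice L n κ) f ≤
        τ * dirichlet (slice L n κ)
          (fun ω => Real.sqrt (f ω)) (fun ω => Real.sqrt (f ω))) :
    Real.log ((n : ℝ) / (κmin : ℝ)) ≤ τ := by
  classical
  obtain ⟨ℓs, hℓs⟩ := hmem
  have hκmin_pos : 0 < κmin := hℓs ▸ hκ ℓs
  have hLn : L * κmin ≤ n := by
    rw [hn]
    calc L * κmin = ∑ _ℓ : Fin L, κmin := by
          rw [Finset.sum_const, Finset.card_univ, Fintype.card_fin, smul_eq_mul]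
      _ ≤ ∑ ℓ, κ ℓ := Finset.sum_le_sum fun ℓ _ => hmin ℓ
  have h2k : 2 * κmin ≤ n := le_trans (Nat.mul_le_mul_right _ hL) hLn
  have hn_pos : 0 < n := by omega
  set Ω := slice L n κ with hΩ
  obtain ⟨ω₀, hω₀⟩ := slice_nonempty κ hn
  have hNnat : 0 < Ω.card := Finset.card_pos.mpr ⟨ω₀, hω₀⟩
  set i₀ : Fin n := ⟨0, hn_pos⟩ with hi₀
  set f : (Fin n → Fin L) → ℝ := fun ω => if ω i₀ = ℓs then 1 else 0 with hf
  -- real abbreviations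
  set N : ℝ := (Ω.card : ℝ) with hN
  set N₁ : ℝ := ((Ω.filter fun ω => ω i₀ = ℓs).card : ℝ) with hN₁
  set r : ℝ := (κmin : ℝ) with hrdef
  set m : ℝ := (n : ℝ) with hmdef
  have hr : 0 < r := by rw [hrdef]; exact_mod_cast hκmin_pos
  have hm : 0 < m := by rw [hmdef]; exact_mod_cast hn_pos
  have h2rm : 2 * r ≤ m := by rw [hrdef, hmdef]; exact_mod_cast h2k
  have hrm : r < m := by linarith
  have hNpos : 0 < N := by rw [hN]; exact_mod_cast hNnat
  -- fiber count, real version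
  have hNN1 : m * N₁ = r * N := by
    rw [hmdef, hN₁, hrdef, hN]
    have := fiber_count (κ := κ) i₀ ℓs
    rw [hℓs] at this
    exact_mod_cast this
  -- sqrt of f is f
  have hsqrt : (fun ω => Real.sqrt (f ω)) = f := by
    funext ω
    rw [hf]
    by_cases h : ω i₀ = ℓs <;> simp [h]
  -- expectation of f
  have hEf : expect Ω f = N₁ / N := by
    rw [expect, hN₁, hN]
    congr 1
    rw [hf]
    rw [Finset.sum_boole]
  -- entropy of f
  have hEnt : entropy Ω f = -(N₁ / N * Real.log (N₁ / N)) := by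
    rw [entropy, hEf]
    have hzero : (fun ω => f ω * Real.log (f ω)) = fun _ => (0:ℝ) := by
      funext ω
      rw [hf]
      by_cases h : ω i₀ = ℓs <;> simp [h]
    rw [hzero]
    simp [expect]
  -- counting lemma inside each ω
  have hcount : ∀ ω ∈ Ω, ∑ j : Fin n, (if ω j = ℓs then (1:ℝ) else 0) = r := by
    intro ω hω
    rw [Finset.sum_boole, hrdef, ← hℓs]
    exact_mod_cast (mem_slice_iff.mp hω) ℓs
  -- pointwise pair sum
  have hS : ∀ ω ∈ Ω,
      (∑ p ∈ Finset.univ.filter (fun p : Fin n × Fin n => p.1 < p.2),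
        grad p.1 p.2 f ω * grad p.1 p.2 f ω)
      = if ω i₀ = ℓs then m - r else r := by
    intro ω hω
    have hgrad : ∀ i j : Fin n, grad i j f ω
        = (if ω (Equiv.swap i j i₀) = ℓs then (1:ℝ) else 0)
          - (if ω i₀ = ℓs then 1 else 0) := fun i j => rfl
    have hsymm : ∀ i j : Fin n,
        grad i j f ω * grad i j f ω = grad j i f ω * grad j i f ω := by
      intro i j
      rw [grad, grad, Equiv.swap_comm]
    have hdiag : ∀ i : Fin n, grad i i f ω * grad i i f ω = 0 := by
      intro i
      have : grad i i f ω = 0 := by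
        rw [grad, Equiv.swap_self]
        simp
      rw [this]; ring
    have hzero : ∀ i j : Fin n, i ≠ i₀ → j ≠ i₀ →
        grad i j f ω * grad i j f ω = 0 := by
      intro i j hi hj
      have : grad i j f ω = 0 := by
        rw [hgrad, Equiv.swap_apply_of_ne_of_ne (Ne.symm hi) (Ne.symm hj)]
        ring
      rw [this]; ring
    rw [sum_pairs_pivot _ i₀ hsymm hdiag hzero]
    have hgi : ∀ j : Fin n, grad i₀ j f ω
        = (if ω j = ℓs then (1:ℝ) else 0) - (if ω i₀ = ℓs then 1 else 0) := by
      intro j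
      rw [hgrad, Equiv.swap_apply_left]
    by_cases h : ω i₀ = ℓs
    · have : ∀ j : Fin n, grad i₀ j f ω * grad i₀ j f ω
          = 1 - (if ω j = ℓs then (1:ℝ) else 0) := by
        intro j
        rw [hgi, if_pos h]
        by_cases hj : ω j = ℓs <;> simp [hj]
      rw [Finset.sum_congr rfl fun j _ => this j, Finset.sum_sub_distrib,
        hcount ω hω, if_pos h, Finset.sum_const, Finset.card_univ, Fintype.card_fin,
        nsmul_eq_mul, mul_one, hmdef]
    · have : ∀ j : Fin n, grad i₀ j f ω * grad i₀ j f ω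
          = (if ω j = ℓs then (1:ℝ) else 0) := by
        intro j
        rw [hgi, if_neg h]
        by_cases hj : ω j = ℓs <;> simp [hj]
      rw [Finset.sum_congr rfl fun j _ => this j, hcount ω hω, if_neg h]
  -- Dirichlet form value
  have hD : dirichlet Ω f f = 1 / (2 * m) * (((m - r) * N₁ + r * (N - N₁)) / N) := by
    rw [dirichlet, ← hmdef]
    congr 1
    have hswap : ∑ p ∈ Finset.univ.filter (fun p : Fin n × Fin n => p.1 < p.2),
        expect Ω (fun ω => grad p.1 p.2 f ω * grad p.1 p.2 f ω)
        = (∑ ω ∈ Ω, ∑ p ∈ Finset.univ.filter (fun p : Fin n × Fin n => p.1 < p.2),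
            grad p.1 p.2 f ω * grad p.1 p.2 f ω) / N := by
      simp only [expect]
      rw [← Finset.sum_div]
      congr 1
      rw [Finset.sum_comm]
    rw [hswap]
    congr 1
    rw [Finset.sum_congr rfl hS, Finset.sum_ite, Finset.sum_const, Finset.sum_const,
      nsmul_eq_mul, nsmul_eq_mul]
    have hcard2 : ((Ω.filter fun ω => ¬ ω i₀ = ℓs).card : ℝ) = N - N₁ := by
      have := Finset.card_filter_add_card_filter_not
        (s := Ω) (p := fun ω => ω i₀ = ℓs)
      rw [hN, hN₁]
      have h2 : ((Ω.filter fun ω => ω i₀ = ℓs).card : ℝ)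
          + ((Ω.filter fun ω => ¬ ω i₀ = ℓs).card : ℝ) = (Ω.card : ℝ) := by
        exact_mod_cast this
      linarith
    rw [hcard2, ← hN₁]
    ring
  -- apply hypothesis
  have key := hτ f (by intro ω; rw [hf]; by_cases h : ω i₀ = ℓs <;> simp [h])
  rw [hsqrt, hEnt, hD] at key
  -- substitute N₁ = r N / m
  have hN1eq : N₁ = r * N / m := by
    field_simp
    linarith [hNN1]
  rw [hN1eq] at key
  have hDval : 1 / (2 * m) * (((m - r) * (r * N / m) + r * (N - r * N / m)) / N)
      = r * (m - r) / m ^ 2 := by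
    field_simp
    ring
  have hEval : (r * N / m) / N = r / m := by
    field_simp
  rw [hDval, hEval] at key
  have hlogeq : Real.log (r / m) = - Real.log (m / r) := by
    rw [Real.log_div hr.ne' hm.ne', Real.log_div hm.ne' hr.ne']
    ring
  rw [hlogeq] at key
  set ℒ := Real.log (m / r) with hLdef
  have hℒ : 0 ≤ ℒ := Real.log_nonneg (by rw [le_div_iff₀ hr]; linarith)
  have hkey2 : r / m * ℒ ≤ τ * (r * (m - r) / m ^ 2) := by
    have : -(r / m * -ℒ) = r / m * ℒ := by ring
    linarith [key]
  have h1 : m * ℒ ≤ τ * (m - r) := by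
    have hmul := mul_le_mul_of_nonneg_left hkey2
      (show (0:ℝ) ≤ m ^ 2 / r by positivity)
    calc m * ℒ = m ^ 2 / r * (r / m * ℒ) := by field_simp
      _ ≤ m ^ 2 / r * (τ * (r * (m - r) / m ^ 2)) := hmul
      _ = τ * (m - r) := by field_simp
  nlinarith [h1, mul_nonneg hℒ hr.le, hrm, hm]

end Multislice
end

section
/- The modified log-Sobolev inequality holds on the multislice Ω_κ with constant 2: for every strictly positive function f : Ω_κ → (0,∞), Ent_κ(f) ≤ 2·𝔈_κ(f, log f). -/
open Finset

namespace Multislice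

/- ---------- elementary real lemmas ---------- -/

lemma phi_nonneg {a b : ℝ} (ha : 0 < a) (hb : 0 < b) :
    0 ≤ (a - b) * (Real.log a - Real.log b) := by
  rcases le_total a b with h | h
  · have h2 : Real.log a ≤ Real.log b := Real.log_le_log ha h
    nlinarith
  · have h2 : Real.log b ≤ Real.log a := Real.log_le_log hb h
    exact mul_nonneg (by linarith) (by linarith)

/-- log-sum inequality -/
lemma sum_log_sum_le {ι : Type*} (s : Finset ι) (x y : ι → ℝ)
    (hx : ∀ i ∈ s, 0 < x i) (hy : ∀ i ∈ s, 0 < y i) :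
    (∑ i ∈ s, x i) * (Real.log (∑ i ∈ s, x i) - Real.log (∑ i ∈ s, y i)) ≤
      ∑ i ∈ s, x i * (Real.log (x i) - Real.log (y i)) := by
  rcases s.eq_empty_or_nonempty with rfl | hne
  · simp
  · have hXpos : 0 < ∑ i ∈ s, x i := Finset.sum_pos hx hne
    have hYpos : 0 < ∑ i ∈ s, y i := Finset.sum_pos hy hne
    set X := ∑ i ∈ s, x i
    set Y := ∑ i ∈ s, y i
    have key : ∀ i ∈ s, x i * (Real.log X - Real.log Y) ≤
        x i * (Real.log (x i) - Real.log (y i)) + ((X / Y) * y i - x i) := by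
      intro i hi
      have hxi := hx i hi; have hyi := hy i hi
      have h1 : Real.log ((y i * X) / (x i * Y)) ≤ (y i * X) / (x i * Y) - 1 :=
        Real.log_le_sub_one_of_pos (by positivity)
      have h2 : Real.log ((y i * X) / (x i * Y))
          = Real.log (y i) + Real.log X - (Real.log (x i) + Real.log Y) := by
        rw [Real.log_div (by positivity) (by positivity), Real.log_mul (ne_of_gt hyi)
          (ne_of_gt hXpos), Real.log_mul (ne_of_gt hxi) (ne_of_gt hYpos)]
      have h3 : x i * ((y i * X) / (x i * Y)) = (X / Y) * y i := by
        field_simp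
      nlinarith [mul_le_mul_of_nonneg_left (h2 ▸ h1) (le_of_lt hxi)]
    calc X * (Real.log X - Real.log Y) = ∑ i ∈ s, x i * (Real.log X - Real.log Y) := by
          rw [← Finset.sum_mul]
      _ ≤ ∑ i ∈ s, (x i * (Real.log (x i) - Real.log (y i)) + ((X / Y) * y i - x i)) :=
          Finset.sum_le_sum key
      _ = (∑ i ∈ s, x i * (Real.log (x i) - Real.log (y i))) + ((X / Y) * Y - X) := by
          rw [Finset.sum_add_distrib, Finset.sum_sub_distrib, ← Finset.mul_sum]
      _ = ∑ i ∈ s, x i * (Real.log (x i) - Real.log (y i)) := by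
          rw [div_mul_cancel₀ _ (ne_of_gt hYpos)]; ring

lemma phi_sum_le {ι : Type*} (s : Finset ι) (a b : ι → ℝ)
    (ha : ∀ i ∈ s, 0 < a i) (hb : ∀ i ∈ s, 0 < b i) :
    ((∑ i ∈ s, a i) - (∑ i ∈ s, b i)) *
        (Real.log (∑ i ∈ s, a i) - Real.log (∑ i ∈ s, b i)) ≤
      ∑ i ∈ s, (a i - b i) * (Real.log (a i) - Real.log (b i)) := by
  have h1 := sum_log_sum_le s a b ha hb
  have h2 := sum_log_sum_le s b a hb ha
  have expand : ((∑ i ∈ s, a i) - (∑ i ∈ s, b i)) *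
      (Real.log (∑ i ∈ s, a i) - Real.log (∑ i ∈ s, b i)) =
      (∑ i ∈ s, a i) * (Real.log (∑ i ∈ s, a i) - Real.log (∑ i ∈ s, b i)) +
      (∑ i ∈ s, b i) * (Real.log (∑ i ∈ s, b i) - Real.log (∑ i ∈ s, a i)) := by ring
  rw [expand]
  calc _ ≤ (∑ i ∈ s, a i * (Real.log (a i) - Real.log (b i))) +
        ∑ i ∈ s, b i * (Real.log (b i) - Real.log (a i)) := add_le_add h1 h2
    _ = ∑ i ∈ s, (a i - b i) * (Real.log (a i) - Real.log (b i)) := by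
        rw [← Finset.sum_add_distrib]
        exact Finset.sum_congr rfl fun i _ => by ring

/-- symmetrization identity -/
lemma sym_identity {ι : Type*} (s : Finset ι) (p g l : ι → ℝ) :
    ∑ i ∈ s, ∑ j ∈ s, (p i * p j) * ((g i - g j) * (l i - l j))
      = 2 * (∑ i ∈ s, p i) * (∑ i ∈ s, p i * (g i * l i))
        - 2 * (∑ i ∈ s, p i * g i) * (∑ i ∈ s, p i * l i) := by
  have inner : ∀ i ∈ s, ∑ j ∈ s, (p i * p j) * ((g i - g j) * (l i - l j))
      = (p i * (g i * l i)) * (∑ j ∈ s, p j) + p i * (∑ j ∈ s, p j * (g j * l j))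
        - (p i * g i) * (∑ j ∈ s, p j * l j) - (p i * l i) * (∑ j ∈ s, p j * g j) := by
    intro i _
    calc ∑ j ∈ s, (p i * p j) * ((g i - g j) * (l i - l j))
        = ∑ j ∈ s, ((p i * (g i * l i)) * p j + p i * (p j * (g j * l j))
            - (p i * g i) * (p j * l j) - (p i * l i) * (p j * g j)) :=
          Finset.sum_congr rfl fun j _ => by ring
      _ = _ := by
          simp only [Finset.sum_add_distrib, Finset.sum_sub_distrib, ← Finset.mul_sum]
  rw [Finset.sum_congr rfl inner]
  simp only [Finset.sum_add_distrib, Finset.sum_sub_distrib, ← Finset.sum_mul,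
    ← Finset.mul_sum]
  ring


/- ---------- combinatorial layer ---------- -/

variable {L n : ℕ} {κ : Fin L → ℕ}

def condSet (L n : ℕ) (κ : Fin L → ℕ) (T : Finset (Fin n)) (τ : Fin n → Fin L) :
    Finset (Fin n → Fin L) :=
  (slice L n κ).filter fun ω => ∀ t ∈ T, ω t = τ t

lemma swap_mem_slice {ω : Fin n → Fin L} (hω : ω ∈ slice L n κ) (i j : Fin n) :
    ω ∘ Equiv.swap i j ∈ slice L n κ := by
  simp only [slice, mem_filter, mem_univ, true_and] at hω ⊢
  intro ℓ
  rw [← hω ℓ]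
  apply Finset.card_nbij' (fun a => Equiv.swap i j a) (fun a => Equiv.swap i j a)
  · intro a ha
    simp only [Finset.mem_coe, mem_filter, mem_univ, true_and, Function.comp_apply] at ha ⊢
    exact ha
  · intro a ha
    simp only [Finset.mem_coe, mem_filter, mem_univ, true_and, Function.comp_apply] at ha ⊢
    rw [Equiv.swap_apply_self]
    exact ha
  · intro a _; exact Equiv.swap_apply_self _ _ _
  · intro a _; exact Equiv.swap_apply_self _ _ _

lemma swap_comp_swap (ω : Fin n → Fin L) (i j : Fin n) :
    (ω ∘ Equiv.swap i j) ∘ Equiv.swap i j = ω := by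
  funext a
  simp only [Function.comp_apply, Equiv.swap_apply_self]

lemma swap_mem_cond {T : Finset (Fin n)} {τ : Fin n → Fin L} {i j : Fin n}
    (hi : i ∉ T) (hj : j ∉ T) {ω : Fin n → Fin L} (hω : ω ∈ condSet L n κ T τ) :
    ω ∘ Equiv.swap i j ∈ condSet L n κ T τ := by
  simp only [condSet, mem_filter] at hω ⊢
  refine ⟨swap_mem_slice hω.1 i j, fun t ht => ?_⟩
  have hti : t ≠ i := fun h => hi (h ▸ ht)
  have htj : t ≠ j := fun h => hj (h ▸ ht)
  simp only [Function.comp_apply, Equiv.swap_apply_of_ne_of_ne hti htj]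
  exact hω.2 t ht

/-- the number of free coordinates of each color, constant on `condSet`. -/
def ccount (κ : Fin L → ℕ) (T : Finset (Fin n)) (τ : Fin n → Fin L) (ℓ : Fin L) : ℕ :=
  κ ℓ - (T.filter fun t => τ t = ℓ).card

lemma count_free {T : Finset (Fin n)} {τ : Fin n → Fin L} {ω : Fin n → Fin L}
    (hω : ω ∈ condSet L n κ T τ) (ℓ : Fin L) :
    (Tᶜ.filter fun j => ω j = ℓ).card = ccount κ T τ ℓ := by
  simp only [condSet, slice, mem_filter, mem_univ, true_and] at hω
  obtain ⟨h1, h2⟩ := hω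
  have e0 : (univ : Finset (Fin n)).filter (fun i => ω i = ℓ)
      = (T.filter fun t => ω t = ℓ) ∪ (Tᶜ.filter fun t => ω t = ℓ) := by
    rw [← Finset.filter_union, Finset.union_compl]
  have e1 : (T.filter fun t => ω t = ℓ) = (T.filter fun t => τ t = ℓ) :=
    Finset.filter_congr (fun t ht => by rw [h2 t ht])
  have e2 : ((T.filter fun t => ω t = ℓ) ∪ (Tᶜ.filter fun t => ω t = ℓ)).card
      = (T.filter fun t => ω t = ℓ).card + (Tᶜ.filter fun t => ω t = ℓ).card := by
    apply Finset.card_union_of_disjoint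
    exact Finset.disjoint_filter_filter disjoint_compl_right
  have := h1 ℓ
  rw [e0, e2, e1] at this
  unfold ccount
  omega

lemma sigma_transport {α β : Type*} (A B : Finset α) (t u : α → Finset β)
    (F : α → β → α) (g : α → ℝ)
    (hmem : ∀ σ ∈ A.sigma t, (⟨F σ.1 σ.2, σ.2⟩ : Σ _ : α, β) ∈ B.sigma u)
    (hmem' : ∀ σ ∈ B.sigma u, (⟨F σ.1 σ.2, σ.2⟩ : Σ _ : α, β) ∈ A.sigma t)
    (hinv : ∀ σ ∈ A.sigma t, F (F σ.1 σ.2) σ.2 = σ.1)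
    (hinv' : ∀ σ ∈ B.sigma u, F (F σ.1 σ.2) σ.2 = σ.1) :
    ∑ a ∈ A, ∑ b ∈ t a, g (F a b) = ∑ a ∈ B, ∑ b ∈ u a, g a := by
  rw [← Finset.sum_sigma A t (fun σ => g (F σ.1 σ.2)),
    ← Finset.sum_sigma B u (fun σ => g σ.1)]
  refine Finset.sum_nbij' (fun σ => ⟨F σ.1 σ.2, σ.2⟩) (fun σ => ⟨F σ.1 σ.2, σ.2⟩)
    hmem hmem' ?_ ?_ ?_
  · rintro ⟨ω, j⟩ h
    simp only [Sigma.mk.inj_iff, heq_eq_eq, and_true]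
    exact hinv ⟨ω, j⟩ h
  · rintro ⟨ω, j⟩ h
    simp only [Sigma.mk.inj_iff, heq_eq_eq, and_true]
    exact hinv' ⟨ω, j⟩ h
  · rintro ⟨ω, j⟩ _; rfl

lemma swap_transport {T : Finset (Fin n)} {τ : Fin n → Fin L} {k : Fin n}
    (hk : k ∉ T) {ℓ ℓ' : Fin L} (g : (Fin n → Fin L) → ℝ) :
    ∑ ω ∈ (condSet L n κ T τ).filter (fun ω => ω k = ℓ),
      ∑ j ∈ Tᶜ.filter (fun j => ω j = ℓ'), g (ω ∘ Equiv.swap k j)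
    = ∑ ω ∈ (condSet L n κ T τ).filter (fun ω => ω k = ℓ'),
      ∑ j ∈ Tᶜ.filter (fun j => ω j = ℓ), g ω := by
  refine sigma_transport _ _ _ _ (fun ω j => ω ∘ Equiv.swap k j) g ?_ ?_ ?_ ?_
  · rintro ⟨ω, j⟩ hσ
    simp only [Finset.mem_sigma, mem_filter] at hσ ⊢
    obtain ⟨⟨hω, hωk⟩, hj, hωj⟩ := hσ
    have hjT : j ∉ T := by simpa using hj
    refine ⟨⟨swap_mem_cond hk hjT hω, ?_⟩, hj, ?_⟩
    · simp only [Function.comp_apply, Equiv.swap_apply_left]; exact hωj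
    · simp only [Function.comp_apply, Equiv.swap_apply_right]; exact hωk
  · rintro ⟨ω, j⟩ hσ
    simp only [Finset.mem_sigma, mem_filter] at hσ ⊢
    obtain ⟨⟨hω, hωk⟩, hj, hωj⟩ := hσ
    have hjT : j ∉ T := by simpa using hj
    refine ⟨⟨swap_mem_cond hk hjT hω, ?_⟩, hj, ?_⟩
    · simp only [Function.comp_apply, Equiv.swap_apply_left]; exact hωj
    · simp only [Function.comp_apply, Equiv.swap_apply_right]; exact hωk
  · rintro ⟨ω, j⟩ _; exact swap_comp_swap ω k j
  · rintro ⟨ω, j⟩ _; exact swap_comp_swap ω k j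

lemma swap_transport' {T : Finset (Fin n)} {τ : Fin n → Fin L} {k : Fin n}
    (hk : k ∉ T) {ℓ ℓ' : Fin L} (g : (Fin n → Fin L) → ℝ) :
    ∑ ω ∈ (condSet L n κ T τ).filter (fun ω => ω k = ℓ),
      ∑ j ∈ Tᶜ.filter (fun j => ω j = ℓ'), g (ω ∘ Equiv.swap k j)
    = (ccount κ T τ ℓ : ℝ) * ∑ ω ∈ (condSet L n κ T τ).filter (fun ω => ω k = ℓ'), g ω := by
  rw [swap_transport hk g, Finset.mul_sum]
  apply Finset.sum_congr rfl
  intro ω hω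
  rw [Finset.sum_const, count_free (Finset.mem_filter.mp hω).1 ℓ, nsmul_eq_mul]

lemma fib_card {T : Finset (Fin n)} {τ : Fin n → Fin L} {k : Fin n} (hk : k ∉ T) (ℓ : Fin L) :
    Tᶜ.card * ((condSet L n κ T τ).filter (fun ω => ω k = ℓ)).card
      = ccount κ T τ ℓ * (condSet L n κ T τ).card := by
  have h1 : ∑ ω ∈ condSet L n κ T τ, (Tᶜ.filter fun j => ω j = ℓ).card
      = ccount κ T τ ℓ * (condSet L n κ T τ).card := by
    rw [Finset.sum_congr rfl (fun ω hω => count_free hω ℓ), Finset.sum_const, smul_eq_mul,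
      mul_comm]
  have h2 : ∑ ω ∈ condSet L n κ T τ, (Tᶜ.filter fun j => ω j = ℓ).card
      = ∑ j ∈ Tᶜ, ((condSet L n κ T τ).filter fun ω => ω j = ℓ).card := by
    simp only [Finset.card_filter]
    rw [Finset.sum_comm]
  have h3 : ∀ j ∈ Tᶜ, ((condSet L n κ T τ).filter fun ω => ω j = ℓ).card
      = ((condSet L n κ T τ).filter fun ω => ω k = ℓ).card := by
    intro j hj
    have hjT : j ∉ T := by simpa using hj
    apply Finset.card_nbij' (fun ω => ω ∘ Equiv.swap j k) (fun ω => ω ∘ Equiv.swap j k)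
    · intro ω hω
      rw [Finset.mem_coe, mem_filter] at hω ⊢
      refine ⟨swap_mem_cond hjT hk hω.1, ?_⟩
      simp only [Function.comp_apply, Equiv.swap_apply_right]; exact hω.2
    · intro ω hω
      rw [Finset.mem_coe, mem_filter] at hω ⊢
      refine ⟨swap_mem_cond hjT hk hω.1, ?_⟩
      simp only [Function.comp_apply, Equiv.swap_apply_left]; exact hω.2
    · intro ω _; exact swap_comp_swap ω j k
    · intro ω _; exact swap_comp_swap ω j k
  rw [h2, Finset.sum_congr rfl h3, Finset.sum_const, smul_eq_mul] at h1
  exact h1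

lemma tower {T : Finset (Fin n)} {τ : Fin n → Fin L} (k : Fin n)
    (X : (Fin n → Fin L) → ℝ) :
    ∑ ℓ, ((((condSet L n κ T τ).filter (fun ω => ω k = ℓ)).card : ℝ)
        / ((condSet L n κ T τ).card))
        * expect ((condSet L n κ T τ).filter (fun ω => ω k = ℓ)) X
      = expect (condSet L n κ T τ) X := by
  have step : ∀ ℓ : Fin L, ((((condSet L n κ T τ).filter (fun ω => ω k = ℓ)).card : ℝ)
        / ((condSet L n κ T τ).card))
        * expect ((condSet L n κ T τ).filter (fun ω => ω k = ℓ)) X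
      = (∑ ω ∈ (condSet L n κ T τ).filter (fun ω => ω k = ℓ), X ω)
        / ((condSet L n κ T τ).card) := by
    intro ℓ
    by_cases h : ((condSet L n κ T τ).filter (fun ω => ω k = ℓ)).card = 0
    · have : ((condSet L n κ T τ).filter (fun ω => ω k = ℓ)) = ∅ :=
        Finset.card_eq_zero.mp h
      rw [this]; simp [expect]
    · have hc : ((((condSet L n κ T τ).filter (fun ω => ω k = ℓ)).card : ℝ)) ≠ 0 :=
        Nat.cast_ne_zero.mpr h
      rw [expect, div_mul_div_comm, mul_comm ((condSet L n κ T τ).card : ℝ) _,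
        mul_div_mul_left _ _ hc]
  rw [Finset.sum_congr rfl (fun ℓ _ => step ℓ), ← Finset.sum_div, expect,
    Finset.sum_fiberwise_of_maps_to (fun ω _ => mem_univ (ω k)) X]


/- ---------- analytic core ---------- -/

noncomputable def hh (f : (Fin n → Fin L) → ℝ) (i j : Fin n) (ω : Fin n → Fin L) : ℝ :=
  grad i j f ω * grad i j (fun ω => Real.log (f ω)) ω

lemma hh_nonneg (f : (Fin n → Fin L) → ℝ) (hf : ∀ ω, 0 < f ω) (i j : Fin n)
    (ω : Fin n → Fin L) : 0 ≤ hh f i j ω := by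
  have h := phi_nonneg (hf (ω ∘ Equiv.swap i j)) (hf ω)
  simpa [hh, grad] using h

lemma hh_self (f : (Fin n → Fin L) → ℝ) (k : Fin n) (ω : Fin n → Fin L) :
    hh f k k ω = 0 := by
  simp [hh, grad, Equiv.swap_self, Function.comp_id]

lemma pair_bound {T : Finset (Fin n)} {τ : Fin n → Fin L} {k : Fin n} (hk : k ∉ T)
    (f : (Fin n → Fin L) → ℝ) (hf : ∀ ω, 0 < f ω) {ℓ ℓ' : Fin L}
    (hl : ((condSet L n κ T τ).filter (fun ω => ω k = ℓ)).Nonempty)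
    (hl' : ((condSet L n κ T τ).filter (fun ω => ω k = ℓ')).Nonempty) :
    ((((condSet L n κ T τ).filter (fun ω => ω k = ℓ)).card : ℝ) / ((condSet L n κ T τ).card))
      * ((((condSet L n κ T τ).filter (fun ω => ω k = ℓ')).card : ℝ) / ((condSet L n κ T τ).card))
      * ((expect ((condSet L n κ T τ).filter (fun ω => ω k = ℓ)) f
          - expect ((condSet L n κ T τ).filter (fun ω => ω k = ℓ')) f)
        * (Real.log (expect ((condSet L n κ T τ).filter (fun ω => ω k = ℓ)) f)
          - Real.log (expect ((condSet L n κ T τ).filter (fun ω => ω k = ℓ')) f)))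
    ≤ (1 / (((condSet L n κ T τ).card : ℝ) * (Tᶜ.card : ℝ)))
      * ∑ ω ∈ (condSet L n κ T τ).filter (fun ω => ω k = ℓ),
          ∑ j ∈ Tᶜ.filter (fun j => ω j = ℓ'), hh f k j ω := by
  classical
  set Ω₀ := condSet L n κ T τ with hO
  set Fl := Ω₀.filter (fun ω => ω k = ℓ) with hFl
  set Fl' := Ω₀.filter (fun ω => ω k = ℓ') with hFl'
  have hΩ : Ω₀.Nonempty := ⟨hl.choose, (Finset.mem_filter.mp hl.choose_spec).1⟩
  have hNpos : (0:ℝ) < Ω₀.card := by exact_mod_cast Finset.card_pos.mpr hΩ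
  have hμpos : (0:ℝ) < (Tᶜ.card : ℝ) := by
    exact_mod_cast Finset.card_pos.mpr ⟨k, Finset.mem_compl.mpr hk⟩
  have hhnn : ∀ (ω : Fin n → Fin L) (j : Fin n), 0 ≤ hh f k j ω :=
    fun ω j => hh_nonneg f hf k j ω
  by_cases hll : ℓ = ℓ'
  · subst hll
    have h0 : (0:ℝ) ≤ (1 / (((Ω₀.card : ℝ)) * (Tᶜ.card : ℝ)))
        * ∑ ω ∈ Fl, ∑ j ∈ Tᶜ.filter (fun j => ω j = ℓ), hh f k j ω :=
      mul_nonneg (by positivity)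
        (Finset.sum_nonneg fun ω _ => Finset.sum_nonneg fun j _ => hhnn ω j)
    have hFF : Fl' = Fl := by simp only [hFl, hFl']
    simpa [sub_self, hFF] using h0
  · have hNl : (0:ℝ) < Fl.card := by exact_mod_cast Finset.card_pos.mpr hl
    have hNl' : (0:ℝ) < Fl'.card := by exact_mod_cast Finset.card_pos.mpr hl'
    have hmu : (Tᶜ.card : ℝ) * Fl.card = (ccount κ T τ ℓ : ℝ) * Ω₀.card := by
      exact_mod_cast congrArg (Nat.cast : ℕ → ℝ) (fib_card (κ := κ) (τ := τ) hk ℓ)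
    have hmu' : (Tᶜ.card : ℝ) * Fl'.card = (ccount κ T τ ℓ' : ℝ) * Ω₀.card := by
      exact_mod_cast congrArg (Nat.cast : ℕ → ℝ) (fib_card (κ := κ) (τ := τ) hk ℓ')
    have hclpos : (0:ℝ) < (ccount κ T τ ℓ : ℝ) := by nlinarith
    have hcl'pos : (0:ℝ) < (ccount κ T τ ℓ' : ℝ) := by nlinarith
    have hGl : 0 < expect Fl f :=
      div_pos (Finset.sum_pos (fun ω _ => hf ω) hl) hNl
    have hGl' : 0 < expect Fl' f :=
      div_pos (Finset.sum_pos (fun ω _ => hf ω) hl') hNl'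
    have hSl : (∑ ω ∈ Fl, f ω) = (Fl.card : ℝ) * expect Fl f := by
      rw [expect]; field_simp
    have hSl' : (∑ ω ∈ Fl', f ω) = (Fl'.card : ℝ) * expect Fl' f := by
      rw [expect]; field_simp
    have hA : ∑ ω ∈ Fl, ∑ j ∈ Tᶜ.filter (fun j => ω j = ℓ'), f ω
        = (ccount κ T τ ℓ' : ℝ) * ∑ ω ∈ Fl, f ω := by
      rw [Finset.mul_sum]
      refine Finset.sum_congr rfl fun ω hω => ?_
      rw [Finset.sum_const, count_free (κ := κ) (Finset.mem_filter.mp hω).1 ℓ',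
        nsmul_eq_mul]
    have hB : ∑ ω ∈ Fl, ∑ j ∈ Tᶜ.filter (fun j => ω j = ℓ'), f (ω ∘ Equiv.swap k j)
        = (ccount κ T τ ℓ : ℝ) * ∑ ω ∈ Fl', f ω :=
      swap_transport' (κ := κ) hk f
    have hphi := phi_sum_le (Fl.sigma (fun ω => Tᶜ.filter (fun j => ω j = ℓ')))
        (fun σ => f (σ.1 ∘ Equiv.swap k σ.2)) (fun σ => f σ.1)
        (fun σ _ => hf _) (fun σ _ => hf _)
    rw [Finset.sum_sigma, Finset.sum_sigma, Finset.sum_sigma] at hphi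
    rw [hA, hB] at hphi
    have hcross : (ccount κ T τ ℓ' : ℝ) * Fl.card = (ccount κ T τ ℓ : ℝ) * Fl'.card := by
      have h3 : ((ccount κ T τ ℓ' : ℝ) * Fl.card) * Ω₀.card
          = ((ccount κ T τ ℓ : ℝ) * Fl'.card) * Ω₀.card := by
        linear_combination (Fl'.card : ℝ) * hmu - (Fl.card : ℝ) * hmu'
      exact mul_right_cancel₀ (ne_of_gt hNpos) h3
    have hMpos : (0:ℝ) < (ccount κ T τ ℓ' : ℝ) * Fl.card := mul_pos hcl'pos hNl
    have hAeq : (ccount κ T τ ℓ' : ℝ) * (∑ ω ∈ Fl, f ω)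
        = ((ccount κ T τ ℓ' : ℝ) * Fl.card) * expect Fl f := by rw [hSl]; ring
    have hBeq : (ccount κ T τ ℓ : ℝ) * (∑ ω ∈ Fl', f ω)
        = ((ccount κ T τ ℓ' : ℝ) * Fl.card) * expect Fl' f := by
      rw [hSl']; linear_combination (- expect Fl' f) * hcross
    rw [hAeq, hBeq] at hphi
    have hlogs : ((((ccount κ T τ ℓ' : ℝ) * Fl.card) * expect Fl' f)
          - (((ccount κ T τ ℓ' : ℝ) * Fl.card) * expect Fl f))
        * (Real.log ((((ccount κ T τ ℓ' : ℝ) * Fl.card)) * expect Fl' f)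
          - Real.log ((((ccount κ T τ ℓ' : ℝ) * Fl.card)) * expect Fl f))
        = ((ccount κ T τ ℓ' : ℝ) * Fl.card) *
            ((expect Fl f - expect Fl' f) *
              (Real.log (expect Fl f) - Real.log (expect Fl' f))) := by
      rw [Real.log_mul (ne_of_gt hMpos) (ne_of_gt hGl'),
        Real.log_mul (ne_of_gt hMpos) (ne_of_gt hGl)]
      ring
    rw [hlogs] at hphi
    have hcoef : ((Fl.card : ℝ) / (Ω₀.card : ℝ)) * ((Fl'.card : ℝ) / (Ω₀.card : ℝ))
        = ((ccount κ T τ ℓ' : ℝ) * Fl.card) / (((Ω₀.card : ℝ)) * (Tᶜ.card : ℝ)) := by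
      rw [div_mul_div_comm, div_eq_div_iff (by positivity) (by positivity)]
      linear_combination ((Fl.card : ℝ) * (Ω₀.card : ℝ)) * hmu'
    rw [hcoef]
    have hfinal : ((ccount κ T τ ℓ' : ℝ) * Fl.card) / ((Ω₀.card : ℝ) * (Tᶜ.card : ℝ))
        * ((expect Fl f - expect Fl' f)
          * (Real.log (expect Fl f) - Real.log (expect Fl' f)))
        = (1 / ((Ω₀.card : ℝ) * (Tᶜ.card : ℝ)))
          * (((ccount κ T τ ℓ' : ℝ) * Fl.card) * ((expect Fl f - expect Fl' f)
            * (Real.log (expect Fl f) - Real.log (expect Fl' f)))) := by ring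
    rw [hfinal]
    refine mul_le_mul_of_nonneg_left ?_ (by positivity)
    exact hphi

set_option maxHeartbeats 2000000 in
lemma marginal_bound {T : Finset (Fin n)} {τ : Fin n → Fin L} {k : Fin n} (hk : k ∉ T)
    (f : (Fin n → Fin L) → ℝ) (hf : ∀ ω, 0 < f ω) (hΩ : (condSet L n κ T τ).Nonempty) :
    (∑ ℓ, ((((condSet L n κ T τ).filter (fun ω => ω k = ℓ)).card : ℝ)
          / ((condSet L n κ T τ).card))
        * (expect ((condSet L n κ T τ).filter (fun ω => ω k = ℓ)) f
          * Real.log (expect ((condSet L n κ T τ).filter (fun ω => ω k = ℓ)) f)))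
      - expect (condSet L n κ T τ) f * Real.log (expect (condSet L n κ T τ) f)
    ≤ (1 / (2 * (Tᶜ.card : ℝ)))
      * ∑ j ∈ Tᶜ.erase k, expect (condSet L n κ T τ) (hh f k j) := by
  classical
  set Ω₀ := condSet L n κ T τ with hO
  have hNpos : (0:ℝ) < Ω₀.card := by exact_mod_cast Finset.card_pos.mpr hΩ
  have hNne : ((Ω₀.card : ℝ)) ≠ 0 := ne_of_gt hNpos
  have hμpos : (0:ℝ) < (Tᶜ.card : ℝ) := by
    exact_mod_cast Finset.card_pos.mpr ⟨k, Finset.mem_compl.mpr hk⟩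
  set s := (univ : Finset (Fin L)).filter
      (fun ℓ => (Ω₀.filter (fun ω => ω k = ℓ)).Nonempty) with hsdef
  have hfib_empty : ∀ ℓ, ℓ ∉ s → Ω₀.filter (fun ω => ω k = ℓ) = ∅ := by
    intro ℓ hℓ
    rw [← Finset.not_nonempty_iff_eq_empty]
    intro hne
    exact hℓ (by simp [hsdef, hne])
  have hP0 : ∀ ℓ, ℓ ∉ s →
      ((Ω₀.filter (fun ω => ω k = ℓ)).card : ℝ) / Ω₀.card = 0 := by
    intro ℓ h; rw [hfib_empty ℓ h]; simp
  have hGpos : ∀ ℓ ∈ s, 0 < expect (Ω₀.filter (fun ω => ω k = ℓ)) f := by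
    intro ℓ hℓ
    have hne : (Ω₀.filter (fun ω => ω k = ℓ)).Nonempty := (Finset.mem_filter.mp hℓ).2
    exact div_pos (Finset.sum_pos (fun ω _ => hf ω) hne)
      (by exact_mod_cast Finset.card_pos.mpr hne)
  have hPpos : ∀ ℓ ∈ s, 0 < ((Ω₀.filter (fun ω => ω k = ℓ)).card : ℝ) / Ω₀.card := by
    intro ℓ hℓ
    have hne : (Ω₀.filter (fun ω => ω k = ℓ)).Nonempty := (Finset.mem_filter.mp hℓ).2
    exact div_pos (by exact_mod_cast Finset.card_pos.mpr hne) hNpos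
  have hg0pos : 0 < expect Ω₀ f :=
    div_pos (Finset.sum_pos (fun ω _ => hf ω) hΩ) hNpos
  have hg0ne : expect Ω₀ f ≠ 0 := ne_of_gt hg0pos
  have hrestrict : ∀ (F : Fin L → ℝ), (∀ ℓ ∈ (univ : Finset (Fin L)), ℓ ∉ s → F ℓ = 0) →
      ∑ ℓ, F ℓ = ∑ ℓ ∈ s, F ℓ :=
    fun F h => (Finset.sum_subset (Finset.subset_univ s) h).symm
  have hcards : ((Ω₀.card : ℝ)) = ∑ ℓ, ((Ω₀.filter (fun ω => ω k = ℓ)).card : ℝ) := by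
    exact_mod_cast congrArg (Nat.cast : ℕ → ℝ)
      (Finset.card_eq_sum_card_fiberwise (fun ω (_ : ω ∈ Ω₀) => mem_univ (ω k)))
  have hP1 : ∑ ℓ ∈ s, ((Ω₀.filter (fun ω => ω k = ℓ)).card : ℝ) / Ω₀.card = 1 := by
    rw [← hrestrict _ (fun ℓ _ h => hP0 ℓ h), ← Finset.sum_div, ← hcards, div_self hNne]
  have htower : ∀ X : (Fin n → Fin L) → ℝ,
      ∑ ℓ ∈ s, (((Ω₀.filter (fun ω => ω k = ℓ)).card : ℝ) / Ω₀.card)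
        * expect (Ω₀.filter (fun ω => ω k = ℓ)) X = expect Ω₀ X := by
    intro X
    rw [← hrestrict _ (fun ℓ _ h => by rw [hfib_empty ℓ h]; simp [expect])]
    exact tower k X
  have hg0 : expect Ω₀ f = ∑ ℓ ∈ s, (((Ω₀.filter (fun ω => ω k = ℓ)).card : ℝ) / Ω₀.card)
      * expect (Ω₀.filter (fun ω => ω k = ℓ)) f := (htower f).symm
  -- Jensen step
  have hJ : ∑ ℓ ∈ s, ((((Ω₀.filter (fun ω => ω k = ℓ)).card : ℝ) / Ω₀.card)
        * Real.log (expect (Ω₀.filter (fun ω => ω k = ℓ)) f))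
      ≤ Real.log (expect Ω₀ f) := by
    have key : ∀ ℓ ∈ s,
        ((((Ω₀.filter (fun ω => ω k = ℓ)).card : ℝ) / Ω₀.card)
            * Real.log (expect (Ω₀.filter (fun ω => ω k = ℓ)) f))
          - ((((Ω₀.filter (fun ω => ω k = ℓ)).card : ℝ) / Ω₀.card)
            * Real.log (expect Ω₀ f))
        ≤ ((((Ω₀.filter (fun ω => ω k = ℓ)).card : ℝ) / Ω₀.card)
            * expect (Ω₀.filter (fun ω => ω k = ℓ)) f) / expect Ω₀ f
          - (((Ω₀.filter (fun ω => ω k = ℓ)).card : ℝ) / Ω₀.card) := by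
      intro ℓ hℓ
      have h1 : Real.log (expect (Ω₀.filter (fun ω => ω k = ℓ)) f / expect Ω₀ f)
          ≤ expect (Ω₀.filter (fun ω => ω k = ℓ)) f / expect Ω₀ f - 1 :=
        Real.log_le_sub_one_of_pos (div_pos (hGpos ℓ hℓ) hg0pos)
      rw [Real.log_div (ne_of_gt (hGpos ℓ hℓ)) hg0ne] at h1
      have h2 := mul_le_mul_of_nonneg_left h1 (le_of_lt (hPpos ℓ hℓ))
      have h3 : (((Ω₀.filter (fun ω => ω k = ℓ)).card : ℝ) / Ω₀.card)
          * (expect (Ω₀.filter (fun ω => ω k = ℓ)) f / expect Ω₀ f - 1)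
          = ((((Ω₀.filter (fun ω => ω k = ℓ)).card : ℝ) / Ω₀.card)
            * expect (Ω₀.filter (fun ω => ω k = ℓ)) f) / expect Ω₀ f
            - (((Ω₀.filter (fun ω => ω k = ℓ)).card : ℝ) / Ω₀.card) := by ring
      have h4 : (((Ω₀.filter (fun ω => ω k = ℓ)).card : ℝ) / Ω₀.card)
          * (Real.log (expect (Ω₀.filter (fun ω => ω k = ℓ)) f) - Real.log (expect Ω₀ f))
          = (((Ω₀.filter (fun ω => ω k = ℓ)).card : ℝ) / Ω₀.card)
            * Real.log (expect (Ω₀.filter (fun ω => ω k = ℓ)) f)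
            - (((Ω₀.filter (fun ω => ω k = ℓ)).card : ℝ) / Ω₀.card)
              * Real.log (expect Ω₀ f) := by ring
      linarith [h2, h3.symm.le, h3.le]
    have hsum := Finset.sum_le_sum key
    rw [Finset.sum_sub_distrib, Finset.sum_sub_distrib, ← Finset.sum_mul, hP1, one_mul,
      ← Finset.sum_div, ← hg0, div_self hg0ne] at hsum
    linarith
  -- restrict entropy sum to s, covariance bound, symmetrization
  have hres1 : ∑ ℓ, ((((Ω₀.filter (fun ω => ω k = ℓ)).card : ℝ) / Ω₀.card)
        * (expect (Ω₀.filter (fun ω => ω k = ℓ)) f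
          * Real.log (expect (Ω₀.filter (fun ω => ω k = ℓ)) f)))
      = ∑ ℓ ∈ s, ((((Ω₀.filter (fun ω => ω k = ℓ)).card : ℝ) / Ω₀.card)
        * (expect (Ω₀.filter (fun ω => ω k = ℓ)) f
          * Real.log (expect (Ω₀.filter (fun ω => ω k = ℓ)) f))) :=
    hrestrict _ (fun ℓ _ h => by rw [hP0 ℓ h, zero_mul])
  rw [hres1]
  have hsym := sym_identity s
    (fun ℓ => (((Ω₀.filter (fun ω => ω k = ℓ)).card : ℝ) / Ω₀.card))
    (fun ℓ => expect (Ω₀.filter (fun ω => ω k = ℓ)) f)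
    (fun ℓ => Real.log (expect (Ω₀.filter (fun ω => ω k = ℓ)) f))
  rw [hP1, ← hg0] at hsym
  -- the double sum is bounded by the h-sum
  have collect : ∑ ℓ ∈ s, ∑ ℓ' ∈ s,
      ((((Ω₀.filter (fun ω => ω k = ℓ)).card : ℝ) / Ω₀.card)
        * ((((Ω₀.filter (fun ω => ω k = ℓ')).card : ℝ) / Ω₀.card)))
        * ((expect (Ω₀.filter (fun ω => ω k = ℓ)) f
            - expect (Ω₀.filter (fun ω => ω k = ℓ')) f)
          * (Real.log (expect (Ω₀.filter (fun ω => ω k = ℓ)) f)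
            - Real.log (expect (Ω₀.filter (fun ω => ω k = ℓ')) f)))
      ≤ (1 / (((Ω₀.card : ℝ)) * (Tᶜ.card : ℝ)))
        * ∑ ω ∈ Ω₀, ∑ j ∈ Tᶜ.erase k, hh f k j ω := by
    calc ∑ ℓ ∈ s, ∑ ℓ' ∈ s,
        ((((Ω₀.filter (fun ω => ω k = ℓ)).card : ℝ) / Ω₀.card)
          * ((((Ω₀.filter (fun ω => ω k = ℓ')).card : ℝ) / Ω₀.card)))
          * ((expect (Ω₀.filter (fun ω => ω k = ℓ)) f
              - expect (Ω₀.filter (fun ω => ω k = ℓ')) f)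
            * (Real.log (expect (Ω₀.filter (fun ω => ω k = ℓ)) f)
              - Real.log (expect (Ω₀.filter (fun ω => ω k = ℓ')) f)))
        ≤ ∑ ℓ ∈ s, ∑ ℓ' ∈ s, (1 / (((Ω₀.card : ℝ)) * (Tᶜ.card : ℝ)))
            * ∑ ω ∈ Ω₀.filter (fun ω => ω k = ℓ),
              ∑ j ∈ Tᶜ.filter (fun j => ω j = ℓ'), hh f k j ω := by
          refine Finset.sum_le_sum fun ℓ hℓ => Finset.sum_le_sum fun ℓ' hℓ' => ?_
          exact pair_bound hk f hf (Finset.mem_filter.mp hℓ).2 (Finset.mem_filter.mp hℓ').2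
      _ = (1 / (((Ω₀.card : ℝ)) * (Tᶜ.card : ℝ)))
          * ∑ ℓ ∈ s, ∑ ℓ' ∈ s, ∑ ω ∈ Ω₀.filter (fun ω => ω k = ℓ),
              ∑ j ∈ Tᶜ.filter (fun j => ω j = ℓ'), hh f k j ω := by
          rw [Finset.mul_sum]
          exact Finset.sum_congr rfl fun ℓ _ => by rw [Finset.mul_sum]
      _ ≤ (1 / (((Ω₀.card : ℝ)) * (Tᶜ.card : ℝ)))
          * ∑ ω ∈ Ω₀, ∑ j ∈ Tᶜ.erase k, hh f k j ω := by
          refine mul_le_mul_of_nonneg_left ?_ (by positivity)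
          calc ∑ ℓ ∈ s, ∑ ℓ' ∈ s, ∑ ω ∈ Ω₀.filter (fun ω => ω k = ℓ),
              ∑ j ∈ Tᶜ.filter (fun j => ω j = ℓ'), hh f k j ω
              = ∑ ℓ ∈ s, ∑ ω ∈ Ω₀.filter (fun ω => ω k = ℓ),
                ∑ ℓ' ∈ s, ∑ j ∈ Tᶜ.filter (fun j => ω j = ℓ'), hh f k j ω :=
                Finset.sum_congr rfl fun ℓ _ => Finset.sum_comm
            _ ≤ ∑ ℓ ∈ s, ∑ ω ∈ Ω₀.filter (fun ω => ω k = ℓ),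
                ∑ j ∈ Tᶜ.erase k, hh f k j ω := by
                refine Finset.sum_le_sum fun ℓ hℓ => Finset.sum_le_sum fun ω hω => ?_
                rw [Finset.sum_fiberwise_eq_sum_filter Tᶜ s (fun j => ω j)
                  (fun j => hh f k j ω)]
                rw [← Finset.sum_erase (f := fun j => hh f k j ω) _ (hh_self f k ω)]
                refine Finset.sum_le_sum_of_subset_of_nonneg
                  (Finset.erase_subset_erase _ (Finset.filter_subset _ _))
                  (fun j _ _ => hh_nonneg f hf k j ω)
            _ ≤ ∑ ℓ, ∑ ω ∈ Ω₀.filter (fun ω => ω k = ℓ),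
                ∑ j ∈ Tᶜ.erase k, hh f k j ω := by
                refine Finset.sum_le_sum_of_subset_of_nonneg (Finset.subset_univ s) ?_
                intro ℓ _ _
                exact Finset.sum_nonneg fun ω _ =>
                  Finset.sum_nonneg fun j _ => hh_nonneg f hf k j ω
            _ = ∑ ω ∈ Ω₀, ∑ j ∈ Tᶜ.erase k, hh f k j ω :=
                Finset.sum_fiberwise_of_maps_to (fun ω _ => mem_univ (ω k)) _
  -- assemble
  have hcov := mul_le_mul_of_nonneg_left hJ (le_of_lt hg0pos)
  have hfinal : (1:ℝ)/2 * ((1 / (((Ω₀.card : ℝ)) * (Tᶜ.card : ℝ)))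
      * ∑ ω ∈ Ω₀, ∑ j ∈ Tᶜ.erase k, hh f k j ω)
      = (1 / (2 * (Tᶜ.card : ℝ))) * ∑ j ∈ Tᶜ.erase k, expect Ω₀ (hh f k j) := by
    rw [Finset.sum_comm]
    have : ∑ j ∈ Tᶜ.erase k, expect Ω₀ (hh f k j)
        = ∑ j ∈ Tᶜ.erase k, (∑ ω ∈ Ω₀, hh f k j ω) / Ω₀.card :=
      Finset.sum_congr rfl fun j _ => rfl
    rw [this, ← Finset.sum_div]
    have hgen : ∀ S : ℝ, (1:ℝ)/2 * ((1 / (((Ω₀.card : ℝ)) * (Tᶜ.card : ℝ))) * S)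
        = (1 / (2 * (Tᶜ.card : ℝ))) * (S / Ω₀.card) := by
      intro S
      have hμne : ((Tᶜ.card : ℝ)) ≠ 0 := ne_of_gt hμpos
      field_simp
      try ring
      try tauto
    exact hgen _
  nlinarith [collect, hsym, hcov]

lemma chain_rule {T : Finset (Fin n)} {τ : Fin n → Fin L} (k : Fin n)
    (f : (Fin n → Fin L) → ℝ) :
    entropy (condSet L n κ T τ) f
      = (∑ ℓ, ((((condSet L n κ T τ).filter (fun ω => ω k = ℓ)).card : ℝ)
            / ((condSet L n κ T τ).card))
          * entropy ((condSet L n κ T τ).filter (fun ω => ω k = ℓ)) f)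
        + ((∑ ℓ, ((((condSet L n κ T τ).filter (fun ω => ω k = ℓ)).card : ℝ)
            / ((condSet L n κ T τ).card))
          * (expect ((condSet L n κ T τ).filter (fun ω => ω k = ℓ)) f
            * Real.log (expect ((condSet L n κ T τ).filter (fun ω => ω k = ℓ)) f)))
          - expect (condSet L n κ T τ) f * Real.log (expect (condSet L n κ T τ) f)) := by
  have t1 := tower (κ := κ) (T := T) (τ := τ) k (fun ω => f ω * Real.log (f ω))
  simp only [entropy, mul_sub]
  rw [Finset.sum_sub_distrib, t1]
  ring


/- ---------- induction assembly ---------- -/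

lemma step_bound {T : Finset (Fin n)} {τ : Fin n → Fin L} {k : Fin n} (hk : k ∉ T)
    (f : (Fin n → Fin L) → ℝ) (hf : ∀ ω, 0 < f ω) (hΩ : (condSet L n κ T τ).Nonempty) :
    entropy (condSet L n κ T τ) f ≤
      (∑ ℓ, ((((condSet L n κ T τ).filter (fun ω => ω k = ℓ)).card : ℝ)
          / ((condSet L n κ T τ).card))
        * entropy ((condSet L n κ T τ).filter (fun ω => ω k = ℓ)) f)
      + (1 / (2 * (Tᶜ.card : ℝ)))
        * ∑ j ∈ Tᶜ.erase k, expect (condSet L n κ T τ) (hh f k j) := by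
  rw [chain_rule k f]
  exact add_le_add_right (marginal_bound hk f hf hΩ) _

lemma condSet_insert {T : Finset (Fin n)} {τ : Fin n → Fin L} {k : Fin n} (hk : k ∉ T)
    (ℓ : Fin L) :
    (condSet L n κ T τ).filter (fun ω => ω k = ℓ)
      = condSet L n κ (insert k T) (Function.update τ k ℓ) := by
  ext ω
  simp only [condSet, Finset.mem_filter, Finset.mem_insert]
  constructor
  · rintro ⟨⟨hs, hT⟩, hkl⟩
    refine ⟨hs, fun t ht => ?_⟩
    rcases ht with rfl | ht
    · rw [Function.update_self]; exact hkl
    · have htk : t ≠ k := by rintro rfl; exact hk ht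
      rw [Function.update_of_ne htk]; exact hT t ht
  · rintro ⟨hs, hT⟩
    refine ⟨⟨hs, fun t ht => ?_⟩, ?_⟩
    · have htk : t ≠ k := by rintro rfl; exact hk ht
      have h := hT t (Or.inr ht)
      rwa [Function.update_of_ne htk] at h
    · have h := hT k (Or.inl rfl)
      rwa [Function.update_self] at h

lemma compl_insert_card {T : Finset (Fin n)} {k : Fin n} (hk : k ∉ T) {m : ℕ}
    (hT : Tᶜ.card = m + 1) : ((insert k T)ᶜ).card = m := by
  have h1 : (insert k T).card = T.card + 1 := Finset.card_insert_of_notMem hk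
  have h2 : Tᶜ.card = Fintype.card (Fin n) - T.card := Finset.card_compl T
  have h3 : ((insert k T)ᶜ).card = Fintype.card (Fin n) - (insert k T).card :=
    Finset.card_compl _
  have h4 : T.card ≤ Fintype.card (Fin n) := Finset.card_le_univ T
  have h5 : (insert k T).card ≤ Fintype.card (Fin n) := Finset.card_le_univ _
  omega

def pairsT {n : ℕ} (T : Finset (Fin n)) : Finset (Fin n × Fin n) :=
  Finset.univ.filter fun p => p.1 < p.2 ∧ p.1 ∉ T ∧ p.2 ∉ T

lemma pairs_insert {T : Finset (Fin n)} (k : Fin n) :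
    pairsT (insert k T) = (pairsT T).filter (fun p => p.1 ≠ k ∧ p.2 ≠ k) := by
  ext p
  simp only [pairsT, Finset.mem_filter, Finset.mem_univ, true_and, Finset.mem_insert,
    not_or]
  tauto

lemma count_pairs (T : Finset (Fin n)) (x : Fin n × Fin n → ℝ) :
    ∑ k ∈ Tᶜ, ∑ p ∈ pairsT (insert k T), x p
      = ∑ p ∈ pairsT T, ((Tᶜ.card : ℝ) - 2) * x p := by
  have h1 : ∀ k ∈ Tᶜ, ∑ p ∈ pairsT (insert k T), x p
      = ∑ p ∈ pairsT T, if p.1 ≠ k ∧ p.2 ≠ k then x p else 0 := by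
    intro k _
    rw [pairs_insert k, Finset.sum_filter]
  rw [Finset.sum_congr rfl h1, Finset.sum_comm]
  refine Finset.sum_congr rfl fun p hp => ?_
  have hp' : p.1 < p.2 ∧ p.1 ∉ T ∧ p.2 ∉ T := by simpa [pairsT] using hp
  have hsub : ({p.1, p.2} : Finset (Fin n)) ⊆ Tᶜ := by
    intro a ha
    rcases Finset.mem_insert.mp ha with rfl | ha
    · exact Finset.mem_compl.mpr hp'.2.1
    · rw [Finset.mem_singleton] at ha
      exact ha ▸ Finset.mem_compl.mpr hp'.2.2
  have hfil : Tᶜ.filter (fun k => p.1 ≠ k ∧ p.2 ≠ k) = Tᶜ \ {p.1, p.2} := by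
    ext a
    simp only [Finset.mem_filter, Finset.mem_sdiff, Finset.mem_insert,
      Finset.mem_singleton, not_or, ne_comm]
    all_goals tauto
  have hcard2 : ({p.1, p.2} : Finset (Fin n)).card = 2 :=
    Finset.card_pair (ne_of_lt hp'.1)
  have h2le : 2 ≤ Tᶜ.card := hcard2 ▸ Finset.card_le_card hsub
  rw [← Finset.sum_filter, Finset.sum_const, hfil, Finset.card_sdiff_of_subset hsub, hcard2,
    nsmul_eq_mul, Nat.cast_sub h2le]
  norm_num

lemma hh_symm (f : (Fin n → Fin L) → ℝ) (i j : Fin n) : hh f i j = hh f j i := by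
  unfold hh grad
  rw [Equiv.swap_comm]

lemma count_ord (T : Finset (Fin n)) (y : Fin n → Fin n → ℝ) (hy : ∀ i j, y i j = y j i)
    (hdiag : ∀ i, y i i = 0) :
    ∑ k ∈ Tᶜ, ∑ j ∈ Tᶜ.erase k, y k j = 2 * ∑ p ∈ pairsT T, y p.1 p.2 := by
  have h1 : ∀ k ∈ Tᶜ, ∑ j ∈ Tᶜ.erase k, y k j = ∑ j ∈ Tᶜ, y k j := by
    intro k _
    exact Finset.sum_erase _ (hdiag k)
  rw [Finset.sum_congr rfl h1, ← Finset.sum_product']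
  have hsplit := Finset.sum_filter_add_sum_filter_not (Tᶜ ×ˢ Tᶜ)
    (fun p : Fin n × Fin n => p.1 < p.2) (fun p => y p.1 p.2)
  have e1 : (Tᶜ ×ˢ Tᶜ).filter (fun p : Fin n × Fin n => p.1 < p.2) = pairsT T := by
    ext p
    simp only [pairsT, Finset.mem_filter, Finset.mem_product, Finset.mem_univ, true_and,
      Finset.mem_compl]
    tauto
  have e3 : ∑ p ∈ (Tᶜ ×ˢ Tᶜ).filter (fun p : Fin n × Fin n => p.2 < p.1), y p.1 p.2
      = ∑ p ∈ (Tᶜ ×ˢ Tᶜ).filter (fun p : Fin n × Fin n => ¬ p.1 < p.2), y p.1 p.2 := by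
    apply Finset.sum_subset
    · intro p hp
      simp only [Finset.mem_filter] at hp ⊢
      exact ⟨hp.1, asymm hp.2⟩
    · intro p hp hnp
      simp only [Finset.mem_filter] at hp hnp
      have hple : p.1 = p.2 := le_antisymm (le_of_not_gt fun h => hnp ⟨hp.1, h⟩) (le_of_not_gt hp.2)
      rw [hple]
      exact hdiag _
  have e4 : ∑ p ∈ (Tᶜ ×ˢ Tᶜ).filter (fun p : Fin n × Fin n => p.2 < p.1), y p.1 p.2
      = ∑ p ∈ pairsT T, y p.1 p.2 := by
    rw [← e1]
    apply Finset.sum_nbij' (fun p => Prod.swap p) (fun p => Prod.swap p)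
    · intro p hp
      simp only [Finset.mem_filter, Finset.mem_product] at hp ⊢
      exact ⟨⟨hp.1.2, hp.1.1⟩, hp.2⟩
    · intro p hp
      simp only [Finset.mem_filter, Finset.mem_product] at hp ⊢
      exact ⟨⟨hp.1.2, hp.1.1⟩, hp.2⟩
    · intro p _; exact Prod.swap_swap p
    · intro p _; exact Prod.swap_swap p
    · intro p _; exact hy p.1 p.2
  have hle : ∑ p ∈ (Tᶜ ×ˢ Tᶜ).filter (fun p : Fin n × Fin n => ¬ p.1 < p.2), y p.1 p.2
      = ∑ p ∈ pairsT T, y p.1 p.2 := by rw [← e3, e4]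
  rw [← hsplit, e1, hle]
  ring

lemma entropy_card_le_one (Ω : Finset (Fin n → Fin L)) (f : (Fin n → Fin L) → ℝ)
    (h : Ω.card ≤ 1) : entropy Ω f = 0 := by
  rcases Nat.le_one_iff_eq_zero_or_eq_one.mp h with h0 | h1
  · rw [Finset.card_eq_zero.mp h0]
    simp [entropy, expect]
  · obtain ⟨a, rfl⟩ := Finset.card_eq_one.mp h1
    simp [entropy, expect]

lemma expect_hh_nonneg (Ω : Finset (Fin n → Fin L)) (f : (Fin n → Fin L) → ℝ)
    (hf : ∀ ω, 0 < f ω) (i j : Fin n) : 0 ≤ expect Ω (hh f i j) :=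
  div_nonneg (Finset.sum_nonneg fun ω _ => hh_nonneg f hf i j ω) (Nat.cast_nonneg _)

lemma expect_hh_diag (Ω : Finset (Fin n → Fin L)) (f : (Fin n → Fin L) → ℝ) (k : Fin n) :
    expect Ω (hh f k k) = 0 := by
  rw [expect, Finset.sum_congr rfl (fun ω _ => hh_self f k ω)]
  simp

lemma cond_mlsi (f : (Fin n → Fin L) → ℝ) (hf : ∀ ω, 0 < f ω) :
    ∀ (m : ℕ) (T : Finset (Fin n)) (τ : Fin n → Fin L), Tᶜ.card = m →
      entropy (condSet L n κ T τ) f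
        ≤ (1 / (m : ℝ)) * ∑ p ∈ pairsT T, expect (condSet L n κ T τ) (hh f p.1 p.2) := by
  intro m
  induction m with
  | zero =>
    intro T τ hT
    have hsub : entropy (condSet L n κ T τ) f = 0 := by
      apply entropy_card_le_one
      rw [Finset.card_le_one]
      intro a ha b hb
      have hTc : Tᶜ = ∅ := Finset.card_eq_zero.mp hT
      simp only [condSet, Finset.mem_filter] at ha hb
      funext i
      have hi : i ∈ T := by
        by_contra hiT
        have : i ∈ Tᶜ := Finset.mem_compl.mpr hiT
        rw [hTc] at this
        exact Finset.notMem_empty i this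
      rw [ha.2 i hi, hb.2 i hi]
    rw [hsub]
    norm_num
  | succ m ih =>
    intro T τ hT
    by_cases hΩ : (condSet L n κ T τ).Nonempty
    swap
    · rw [Finset.not_nonempty_iff_eq_empty] at hΩ
      rw [hΩ]
      simp [entropy, expect]
    · have hμ : (Tᶜ.card : ℝ) = (m : ℝ) + 1 := by exact_mod_cast congrArg Nat.cast hT
      have key : ∀ k ∈ Tᶜ, entropy (condSet L n κ T τ) f
          ≤ (1 / (m : ℝ)) * ∑ p ∈ pairsT (insert k T),
              expect (condSet L n κ T τ) (hh f p.1 p.2)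
            + (1 / (2 * ((m : ℝ) + 1)))
              * ∑ j ∈ Tᶜ.erase k, expect (condSet L n κ T τ) (hh f k j) := by
        intro k hk'
        have hk : k ∉ T := Finset.mem_compl.mp hk'
        have step := step_bound hk f hf hΩ
        rw [hμ] at step
        have hent : ∀ ℓ : Fin L,
            ((((condSet L n κ T τ).filter (fun ω => ω k = ℓ)).card : ℝ)
              / ((condSet L n κ T τ).card))
              * entropy ((condSet L n κ T τ).filter (fun ω => ω k = ℓ)) f
            ≤ ((((condSet L n κ T τ).filter (fun ω => ω k = ℓ)).card : ℝ)
              / ((condSet L n κ T τ).card))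
              * ((1 / (m : ℝ)) * ∑ p ∈ pairsT (insert k T),
                expect ((condSet L n κ T τ).filter (fun ω => ω k = ℓ)) (hh f p.1 p.2)) := by
          intro ℓ
          refine mul_le_mul_of_nonneg_left ?_
            (div_nonneg (Nat.cast_nonneg _) (Nat.cast_nonneg _))
          have hih := ih (insert k T) (Function.update τ k ℓ) (compl_insert_card hk hT)
          rwa [← condSet_insert hk ℓ] at hih
        have hsum := Finset.sum_le_sum (fun ℓ (_ : ℓ ∈ (univ : Finset (Fin L))) => hent ℓ)
        have hswap : ∑ ℓ, ((((condSet L n κ T τ).filter (fun ω => ω k = ℓ)).card : ℝ)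
              / ((condSet L n κ T τ).card))
              * ((1 / (m : ℝ)) * ∑ p ∈ pairsT (insert k T),
                expect ((condSet L n κ T τ).filter (fun ω => ω k = ℓ)) (hh f p.1 p.2))
            = (1 / (m : ℝ)) * ∑ p ∈ pairsT (insert k T),
                expect (condSet L n κ T τ) (hh f p.1 p.2) := by
          have e1 : ∀ ℓ : Fin L, ((((condSet L n κ T τ).filter (fun ω => ω k = ℓ)).card : ℝ)
                / ((condSet L n κ T τ).card))
                * ((1 / (m : ℝ)) * ∑ p ∈ pairsT (insert k T),
                  expect ((condSet L n κ T τ).filter (fun ω => ω k = ℓ)) (hh f p.1 p.2))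
              = (1 / (m : ℝ)) * ∑ p ∈ pairsT (insert k T),
                  ((((condSet L n κ T τ).filter (fun ω => ω k = ℓ)).card : ℝ)
                    / ((condSet L n κ T τ).card))
                  * expect ((condSet L n κ T τ).filter (fun ω => ω k = ℓ)) (hh f p.1 p.2) := by
            intro ℓ
            rw [Finset.mul_sum]
            rw [Finset.mul_sum]
            ring_nf
            rw [Finset.mul_sum]
            refine Finset.sum_congr rfl fun p _ => by ring
          rw [Finset.sum_congr rfl fun ℓ _ => e1 ℓ, ← Finset.mul_sum, Finset.sum_comm]
          congr 1
          refine Finset.sum_congr rfl fun p _ => tower k (hh f p.1 p.2)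
        rw [hswap] at hsum
        linarith [step, hsum]
      have hkey_sum := Finset.sum_le_sum key
      rw [Finset.sum_const, nsmul_eq_mul, hT] at hkey_sum
      rw [Finset.sum_add_distrib, ← Finset.mul_sum, ← Finset.mul_sum,
        count_pairs T (fun p => expect (condSet L n κ T τ) (hh f p.1 p.2)),
        count_ord T (fun i j => expect (condSet L n κ T τ) (hh f i j))
          (fun i j => by
            show expect (condSet L n κ T τ) (hh f i j)
              = expect (condSet L n κ T τ) (hh f j i)
            rw [hh_symm])
          (fun i => by
            show expect (condSet L n κ T τ) (hh f i i) = 0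
            exact expect_hh_diag _ f i),
        hμ] at hkey_sum
      push_cast at hkey_sum
      set X := ∑ p ∈ pairsT T, expect (condSet L n κ T τ) (hh f p.1 p.2) with hX
      have hXsimp : ∑ p ∈ pairsT T, ((m : ℝ) + 1 - 2)
          * expect (condSet L n κ T τ) (hh f p.1 p.2) = ((m : ℝ) - 1) * X := by
        rw [hX, Finset.mul_sum]
        exact Finset.sum_congr rfl fun p _ => by ring
      rw [hXsimp] at hkey_sum
      have hXnn : 0 ≤ X :=
        Finset.sum_nonneg fun p _ => expect_hh_nonneg _ f hf p.1 p.2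
      have hm1pos : (0:ℝ) < (m : ℝ) + 1 := by positivity
      have hcoef : (1 / (m : ℝ)) * ((m : ℝ) - 1) + (1 / (2 * ((m : ℝ) + 1))) * 2 ≤ 1 := by
        rcases Nat.eq_zero_or_pos m with rfl | hm
        · norm_num
        · have hmp : (0:ℝ) < (m : ℝ) := by exact_mod_cast hm
          have h1 : (1 / (m : ℝ)) * ((m : ℝ) - 1) = 1 - 1 / (m : ℝ) := by
            field_simp
          have h2 : (1 / (2 * ((m : ℝ) + 1))) * 2 = 1 / ((m : ℝ) + 1) := by
            field_simp
          have h3 : 1 / ((m : ℝ) + 1) ≤ 1 / (m : ℝ) :=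
            one_div_le_one_div_of_le hmp (by linarith)
          rw [h1, h2]
          linarith
      have hrhs : (1 / (m : ℝ)) * (((m : ℝ) - 1) * X)
            + (1 / (2 * ((m : ℝ) + 1))) * (2 * X)
          ≤ X := by
        have := mul_le_mul_of_nonneg_right hcoef hXnn
        rw [one_mul] at this
        calc (1 / (m : ℝ)) * (((m : ℝ) - 1) * X) + (1 / (2 * ((m : ℝ) + 1))) * (2 * X)
            = ((1 / (m : ℝ)) * ((m : ℝ) - 1) + (1 / (2 * ((m : ℝ) + 1))) * 2) * X := by
              ring
          _ ≤ X := this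
      have hfin : ((m : ℝ) + 1) * entropy (condSet L n κ T τ) f ≤ X := le_trans hkey_sum hrhs
      rw [Nat.cast_succ]
      rw [show (1 / ((m : ℝ) + 1)) * X = X / ((m : ℝ) + 1) by ring]
      rw [le_div_iff₀ hm1pos]
      linarith

/-- the modified log-Sobolev inequality holds on the multislice with
constant 2. -/
theorem multislice_mlsi_upper
    (L : ℕ) (hL : 2 ≤ L) (κ : Fin L → ℕ) (hκ : ∀ ℓ, 0 < κ ℓ)
    (n : ℕ) (hn : n = ∑ ℓ, κ ℓ)
    (f : (Fin n → Fin L) → ℝ) (hf : ∀ ω, 0 < f ω) :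
    entropy (slice L n κ) f ≤
      2 * dirichlet (slice L n κ) f (fun ω => Real.log (f ω)) := by
  classical
  have hL0 : 0 < L := by omega
  have hn0 : 0 < n := by
    rw [hn]
    exact Finset.sum_pos (fun ℓ _ => hκ ℓ) ⟨⟨0, hL0⟩, Finset.mem_univ _⟩
  have hcompl : ((∅ : Finset (Fin n))ᶜ).card = n := by
    rw [Finset.compl_empty, Finset.card_univ, Fintype.card_fin]
  have h := cond_mlsi (κ := κ) f hf n (∅ : Finset (Fin n)) (fun _ => ⟨0, hL0⟩) hcompl
  have hcond : condSet L n κ (∅ : Finset (Fin n)) (fun _ => ⟨0, hL0⟩) = slice L n κ := by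
    unfold condSet
    apply Finset.filter_true_of_mem
    intro ω _ t ht
    exact absurd ht (Finset.notMem_empty t)
  have hpairs : pairsT (∅ : Finset (Fin n))
      = Finset.univ.filter (fun p : Fin n × Fin n => p.1 < p.2) := by
    ext p
    simp [pairsT]
  rw [hcond, hpairs] at h
  have hne : ((n : ℝ)) ≠ 0 := Nat.cast_ne_zero.mpr (by omega)
  have h2 : 2 * dirichlet (slice L n κ) f (fun ω => Real.log (f ω))
      = (1 / (n : ℝ)) * ∑ p ∈ Finset.univ.filter (fun p : Fin n × Fin n => p.1 < p.2),
          expect (slice L n κ) (hh f p.1 p.2) := by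
    unfold dirichlet
    have : (2 : ℝ) * (1 / (2 * (n : ℝ))) = 1 / (n : ℝ) := by
      field_simp
    rw [← mul_assoc, this]
    rfl
  rw [h2]
  exact h

end Multislice
end

section
/- Every valid modified log-Sobolev constant of the multislice Ω_κ is at least 1/2: if τ ∈ ℝ satisfies Ent_κ(f) ≤ τ·𝔈_κ(f, log f) for all strictly positive f : Ω_κ → (0,∞), then τ ≥ 1/2. -/
open Finset

namespace Multislice

-- helper lemmas
lemma expect_const_mul {L n : ℕ} (Ω : Finset (Fin n → Fin L)) (c : ℝ)
    (h : (Fin n → Fin L) → ℝ) :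
    expect Ω (fun ω => c * h ω) = c * expect Ω h := by
  unfold expect; rw [← mul_sum, mul_div_assoc]

lemma expect_add {L n : ℕ} (Ω : Finset (Fin n → Fin L))
    (h1 h2 : (Fin n → Fin L) → ℝ) :
    expect Ω (fun ω => h1 ω + h2 ω) = expect Ω h1 + expect Ω h2 := by
  unfold expect; rw [sum_add_distrib, add_div]

lemma expect_const {L n : ℕ} {Ω : Finset (Fin n → Fin L)} (hΩ : Ω.Nonempty) (c : ℝ) :
    expect Ω (fun _ => c) = c := by
  unfold expect
  rw [sum_const, nsmul_eq_mul]
  have h : (Ω.card : ℝ) ≠ 0 := by exact_mod_cast (card_pos.2 hΩ).ne'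
  field_simp

lemma log_taylor_lb {x : ℝ} (h0 : 0 ≤ x) (h1 : x ≤ 1/2) :
    x - x^2/2 - 2*x^3 ≤ Real.log (1+x) ∧ Real.log (1+x) ≤ x - x^2/2 + 2*x^3 := by
  have hx : |(-x)| < 1 := by rw [abs_neg, abs_of_nonneg h0]; linarith
  have H := Real.abs_log_sub_add_sum_range_le hx 2
  rw [abs_le] at H
  simp [Finset.sum_range_succ, abs_of_nonneg h0] at H
  have h3 : x^3/(1-x) ≤ 2*x^3 := by
    rw [div_le_iff₀ (by linarith)]
    nlinarith [pow_nonneg h0 3]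
  have h4 : (0:ℝ) ≤ x^3/(1-x) := div_nonneg (by positivity) (by linarith)
  constructor <;> nlinarith [H.1, H.2]

lemma aux_half_le (p τ : ℝ) (hp0 : 0 < p) (hp1 : p < 1)
    (h : ∀ ε : ℝ, 0 < ε → ε ≤ 1/2 →
      p*((1+ε)*Real.log (1+ε)) - (1+ε*p)*Real.log (1+ε*p) ≤
        τ * (ε * Real.log (1+ε) * (p*(1-p)))) :
    1/2 ≤ τ := by
  have hq : 0 < p*(1-p) := by nlinarith
  by_contra hlt
  push_neg at hlt
  have hs : 0 < 1/2 - τ := by linarith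
  obtain ⟨ε, hε0, hε12, hεq, hεs⟩ :
      ∃ ε : ℝ, 0 < ε ∧ ε ≤ 1/2 ∧ ε ≤ (p*(1-p))/28 ∧ ε ≤ (1/2-τ)*(p*(1-p))/14 :=
    ⟨min (1/2) (min ((p*(1-p))/28) ((1/2-τ)*(p*(1-p))/14)),
      lt_min (by norm_num) (lt_min (by positivity) (by positivity)),
      min_le_left _ _, le_trans (min_le_right _ _) (min_le_left _ _),
      le_trans (min_le_right _ _) (min_le_right _ _)⟩
  have hL := log_taylor_lb hε0.le hε12
  have hεp : ε*p ≤ 1/2 := by nlinarith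
  have hM := (log_taylor_lb (x := ε*p) (by positivity) hεp).2
  have hLε : Real.log (1+ε) ≤ ε := by
    have := Real.log_le_sub_one_of_pos (x := 1+ε) (by linarith)
    linarith
  have hLpos : 0 < Real.log (1+ε) := Real.log_pos (by linarith)
  have key := h ε hε0 hε12
  -- entropy lower bound
  have hEnt : ε^2*(p*(1-p))/2 - 7*ε^3 ≤
      p*((1+ε)*Real.log (1+ε)) - (1+ε*p)*Real.log (1+ε*p) := by
    have h1 : p*((1+ε)*(ε - ε^2/2 - 2*ε^3)) ≤ p*((1+ε)*Real.log (1+ε)) :=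
      mul_le_mul_of_nonneg_left
        (mul_le_mul_of_nonneg_left hL.1 (by linarith)) hp0.le
    have h2 : (1+ε*p)*Real.log (1+ε*p) ≤ (1+ε*p)*((ε*p) - (ε*p)^2/2 + 2*(ε*p)^3) :=
      mul_le_mul_of_nonneg_left hM (by nlinarith)
    have hε3 : (0:ℝ) ≤ ε^3 := (pow_pos hε0 3).le
    have hp3 : p^3 ≤ 1 := pow_le_one₀ hp0.le hp1.le
    have hp3' : (0:ℝ) ≤ p^3 := by positivity
    have h2εp : 2*(ε*p) ≤ 1 := by linarith
    have t1 : 2*p*ε^4 ≤ ε^3 := by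
      have := mul_le_mul_of_nonneg_right h2εp hε3
      linarith
    have t2 : 2*ε^4*p^4 ≤ ε^3 := by
      have h1' : 2*(ε*p)*p^3 ≤ 1 := mul_le_one₀ h2εp hp3' hp3
      have := mul_le_mul_of_nonneg_right h1' hε3
      linarith
    have t3 : (3/2)*ε^3*p^3 ≤ (3/2)*ε^3 := by
      have := mul_le_mul_of_nonneg_left hp3 (by positivity : (0:ℝ) ≤ (3/2)*ε^3)
      linarith
    have t4 : (5/2)*p*ε^3 ≤ (5/2)*ε^3 := by
      have := mul_le_mul_of_nonneg_left hp1.le (by positivity : (0:ℝ) ≤ (5/2)*ε^3)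
      linarith
    have hexp : p*((1+ε)*(ε - ε^2/2 - 2*ε^3)) - (1+ε*p)*((ε*p) - (ε*p)^2/2 + 2*(ε*p)^3)
        = ε^2*(p*(1-p))/2 - (5/2)*p*ε^3 - 2*p*ε^4 - (3/2)*ε^3*p^3 - 2*ε^4*p^4 := by ring
    linarith [pow_pos hε0 3]
  have hlhs : 0 < ε^2*(p*(1-p))/2 - 7*ε^3 := by
    have h9 : 7*ε^3 ≤ (p*(1-p))*ε^2/4 := by
      have := mul_le_mul_of_nonneg_right hεq (mul_pos (by norm_num : (0:ℝ) < 7) (pow_pos hε0 2)).le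
      linarith
    linarith [mul_pos hq (pow_pos hε0 2)]
  have hτpos : 0 < τ := by
    by_contra hτ
    push_neg at hτ
    have : τ * (ε * Real.log (1+ε) * (p*(1-p))) ≤ 0 :=
      mul_nonpos_of_nonpos_of_nonneg hτ (by positivity)
    linarith
  have hD : τ * (ε * Real.log (1+ε) * (p*(1-p))) ≤ τ * (ε * ε * (p*(1-p))) :=
    mul_le_mul_of_nonneg_left
      (mul_le_mul_of_nonneg_right (mul_le_mul_of_nonneg_left hLε hε0.le) hq.le) hτpos.le
  have hfin : ε^2*(p*(1-p))/2 - 7*ε^3 ≤ τ * (ε*ε*(p*(1-p))) := by linarith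
  have hexp2 : τ*(ε*ε*(p*(1-p))) = ε^2*(p*(1-p))/2 - (1/2-τ)*(ε^2*(p*(1-p))) := by ring
  have h7 : (1/2-τ)*(ε^2*(p*(1-p))) ≤ 7*ε^3 := by linarith
  have h8 : 7*ε^3 ≤ (1/2-τ)*(ε^2*(p*(1-p)))/2 := by
    have := mul_le_mul_of_nonneg_right hεs (mul_pos (by norm_num : (0:ℝ) < 7) (pow_pos hε0 2)).le
    linarith
  linarith [mul_pos (mul_pos hs hq) (pow_pos hε0 2)]


/-- every valid modified log-Sobolev constant of the multislice is at
least `1/2`. -/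
theorem multislice_mlsi_lower
    (L : ℕ) (hL : 2 ≤ L) (κ : Fin L → ℕ) (hκ : ∀ ℓ, 0 < κ ℓ)
    (n : ℕ) (hn : n = ∑ ℓ, κ ℓ)
    (τ : ℝ)
    (hτ : ∀ f : (Fin n → Fin L) → ℝ, (∀ ω, 0 < f ω) →
      entropy (slice L n κ) f ≤
        τ * dirichlet (slice L n κ) f (fun ω => Real.log (f ω))) :
    (1 : ℝ) / 2 ≤ τ := by
  set Ω := slice L n κ with hΩdef
  have hL0 : 0 < L := by omega
  set ℓ₀ : Fin L := ⟨0, hL0⟩ with hℓ₀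
  set k := κ ℓ₀ with hkdef
  have hk : 0 < k := hκ ℓ₀
  -- n ≥ k + 1 and n ≥ 2
  have hkn : k < n := by
    have hmem1 : (⟨1, by omega⟩ : Fin L) ∈ univ.erase ℓ₀ := by
      refine mem_erase.2 ⟨?_, mem_univ _⟩
      exact fun h => by simpa using congrArg Fin.val h
    have h1 : κ ⟨1, by omega⟩ ≤ ∑ ℓ ∈ univ.erase ℓ₀, κ ℓ :=
      Finset.single_le_sum (fun i _ => Nat.zero_le _) hmem1
    have h2 : ∑ ℓ, κ ℓ = κ ℓ₀ + ∑ ℓ ∈ univ.erase ℓ₀, κ ℓ :=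
      (Finset.add_sum_erase _ _ (mem_univ _)).symm
    have := hκ ⟨1, by omega⟩
    omega
  have hn0 : 0 < n := by omega
  set i₀ : Fin n := ⟨0, hn0⟩ with hi₀
  -- membership characterization
  have hmem : ∀ ω : Fin n → Fin L, ω ∈ Ω ↔
      ∀ ℓ, (univ.filter fun i => ω i = ℓ).card = κ ℓ := by
    intro ω; simp [hΩdef, slice]
  -- nonemptiness
  have hne : Ω.Nonempty := by
    have hcard : Fintype.card (Σ ℓ : Fin L, Fin (κ ℓ)) = Fintype.card (Fin n) := by
      simp [hn]
    let e : (Σ ℓ : Fin L, Fin (κ ℓ)) ≃ Fin n := Fintype.equivOfCardEq hcard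
    refine ⟨fun i => (e.symm i).1, (hmem _).2 fun ℓ => ?_⟩
    have h1 : (univ.filter fun i : Fin n => (e.symm i).1 = ℓ).card
        = (univ.filter fun x : (Σ m : Fin L, Fin (κ m)) => x.1 = ℓ).card :=
      Finset.card_equiv e.symm (by simp)
    have h2 : (univ.filter fun x : (Σ m : Fin L, Fin (κ m)) => x.1 = ℓ)
        = univ.map (⟨Sigma.mk ℓ, sigma_mk_injective⟩) := by
      ext x
      simp only [mem_filter, mem_univ, true_and, mem_map, Function.Embedding.coeFn_mk]
      constructor
      · rintro rfl; exact ⟨x.2, rfl⟩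
      · rintro ⟨y, rfl⟩; rfl
    rw [h1, h2, card_map, card_univ, Fintype.card_fin]
  have hC : 0 < (Ω.card : ℝ) := by exact_mod_cast card_pos.2 hne
  -- swap invariance
  have hswap : ∀ (i j : Fin n) (ω : Fin n → Fin L), ω ∈ Ω →
      (ω ∘ (Equiv.swap i j) : Fin n → Fin L) ∈ Ω := by
    intro i j ω hω
    rw [hmem] at hω ⊢
    intro ℓ
    rw [← hω ℓ]
    exact Finset.card_equiv (Equiv.swap i j) (by simp)
  -- exchangeability
  have hNeq : ∀ i j : Fin n,
      (Ω.filter fun ω => ω i = ℓ₀).card = (Ω.filter fun ω => ω j = ℓ₀).card := by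
    intro i j
    refine Finset.card_nbij' (fun ω => ω ∘ (Equiv.swap i j)) (fun ω => ω ∘ (Equiv.swap i j))
      ?_ ?_ ?_ ?_
    · intro ω hω
      rw [mem_coe, mem_filter] at hω ⊢
      exact ⟨hswap i j ω hω.1, by simpa [Function.comp, Equiv.swap_apply_right] using hω.2⟩
    · intro ω hω
      rw [mem_coe, mem_filter] at hω ⊢
      exact ⟨hswap i j ω hω.1, by simpa [Function.comp, Equiv.swap_apply_left] using hω.2⟩
    · intro ω _; funext a; simp [Function.comp, Equiv.swap_apply_self]
    · intro ω _; funext a; simp [Function.comp, Equiv.swap_apply_self]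
  -- counting
  have hsum : ∑ i : Fin n, (Ω.filter fun ω => ω i = ℓ₀).card = k * Ω.card := by
    have h1 : ∀ i : Fin n, (Ω.filter fun ω => ω i = ℓ₀).card
        = ∑ ω ∈ Ω, if ω i = ℓ₀ then 1 else 0 := fun i => Finset.card_filter _ _
    rw [Finset.sum_congr rfl fun i _ => h1 i, Finset.sum_comm]
    have h2 : ∀ ω ∈ Ω, (∑ i : Fin n, if ω i = ℓ₀ then 1 else 0) = k := by
      intro ω hω
      rw [← Finset.card_filter]
      exact (hmem ω).1 hω ℓ₀
    rw [Finset.sum_congr rfl h2, Finset.sum_const, smul_eq_mul, mul_comm]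
  have hNC : n * (Ω.filter fun ω => ω i₀ = ℓ₀).card = k * Ω.card := by
    rw [← hsum, Finset.sum_congr rfl fun i _ => hNeq i i₀, Finset.sum_const,
      card_univ, Fintype.card_fin, smul_eq_mul]
  -- real p
  set p : ℝ := (k : ℝ) / n with hpdef
  have hp0 : 0 < p := by
    apply div_pos <;> [exact_mod_cast hk; exact_mod_cast hn0]
  have hp1 : p < 1 := by
    rw [hpdef, div_lt_one (by exact_mod_cast hn0)]
    exact_mod_cast hkn
  -- the indicator function
  set g : (Fin n → Fin L) → ℝ := fun ω => if ω i₀ = ℓ₀ then 1 else 0 with hgdef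
  have hgE : expect Ω g = p := by
    unfold expect
    rw [hgdef]
    simp only [Finset.sum_boole]
    rw [hpdef]
    rw [div_eq_div_iff hC.ne' (by exact_mod_cast hn0.ne' : (n:ℝ) ≠ 0)]
    have h' : ((n:ℝ)) * ((Ω.filter fun ω => ω i₀ = ℓ₀).card : ℝ) = (k:ℝ) * (Ω.card : ℝ) := by
      exact_mod_cast hNC
    linarith
  -- indicator of a coordinate
  set x : (Fin n → Fin L) → Fin n → ℝ := fun ω b => if ω b = ℓ₀ then 1 else 0 with hxdef
  have hxsum : ∀ ω ∈ Ω, ∑ b : Fin n, x ω b = (k : ℝ) := by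
    intro ω hω
    rw [hxdef]
    simp only [Finset.sum_boole]
    norm_cast
    exact (hmem ω).1 hω ℓ₀
  -- gradient of g
  have hgradg : ∀ (a b : Fin n) (ω : Fin n → Fin L), a ≠ i₀ → b ≠ i₀ →
      grad a b g ω = 0 := by
    intro a b ω ha hb
    unfold grad
    rw [hgdef]
    simp only [Function.comp_apply]
    simp only [Equiv.swap_apply_of_ne_of_ne (Ne.symm ha) (Ne.symm hb)]
    ring
  have hgradg2 : ∀ (b : Fin n) (ω : Fin n → Fin L),
      grad i₀ b g ω = x ω b - x ω i₀ := by
    intro b ω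
    unfold grad
    rw [hgdef, hxdef]
    simp [Equiv.swap_apply_left]
  have hn1 : 1 ≤ n := hn0
  have hfe : (univ.filter fun b : Fin n => i₀ < b) = univ.erase i₀ := by
    ext b
    simp only [mem_filter, mem_univ, true_and, mem_erase, and_true]
    constructor
    · exact fun h => ne_of_gt h
    · intro hb
      have hle : i₀ ≤ b := by rw [Fin.le_def]; exact Nat.zero_le _
      exact lt_of_le_of_ne hle (Ne.symm hb)
  -- pointwise sum over pairs
  have hpoint : ∀ ω ∈ Ω,
      (∑ q ∈ univ.filter (fun q : Fin n × Fin n => q.1 < q.2),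
        grad q.1 q.2 g ω * grad q.1 q.2 g ω) = ((n : ℝ) - 2*k) * g ω + k := by
    intro ω hω
    rw [← Finset.sum_filter_of_ne (p := fun q : Fin n × Fin n => q.1 = i₀) ?hzero]
    case hzero =>
      intro q hq hne
      by_contra h1
      have h2 : q.2 ≠ i₀ := by
        intro h2
        rw [mem_filter] at hq
        have := hq.2
        rw [h2] at this
        exact absurd this (by simp [hi₀, Fin.lt_def])
      exact hne (by rw [hgradg q.1 q.2 ω h1 h2]; ring)
    · -- reindex to sum over b with i₀ < b
      rw [Finset.sum_nbij' (i := fun q : Fin n × Fin n => q.2)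
        (j := fun b : Fin n => (i₀, b))
        (t := univ.filter fun b : Fin n => i₀ < b)
        (g := fun b => grad i₀ b g ω * grad i₀ b g ω)
        ?hi ?hj ?left ?right ?hcong]
      case hi =>
        intro q hq
        simp only [mem_filter, mem_univ, true_and] at hq ⊢
        rw [← hq.2]; exact hq.1
      case hj =>
        intro b hb
        simp only [mem_filter, mem_univ, true_and] at hb ⊢
        exact ⟨hb, trivial⟩
      case left =>
        intro q hq
        simp only [mem_filter, mem_univ, true_and] at hq
        rw [← hq.2]
      case right => intro b _; rfl
      case hcong =>
        intro q hq
        simp only [mem_filter, mem_univ, true_and] at hq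
        rw [hq.2]
      rw [hfe]
      have hterm : ∀ b : Fin n, grad i₀ b g ω * grad i₀ b g ω
          = x ω b + x ω i₀ - (2 * x ω i₀) * x ω b := by
        intro b
        rw [hgradg2]
        simp only [hxdef]
        by_cases hb : ω b = ℓ₀ <;> by_cases h0 : ω i₀ = ℓ₀ <;> simp [hb, h0] <;> ring
      rw [Finset.sum_congr rfl fun b _ => hterm b]
      have e1 : ∑ b ∈ univ.erase i₀, x ω b = (k : ℝ) - x ω i₀ := by
        rw [Finset.sum_erase_eq_sub (mem_univ i₀)]
        rw [hxsum ω hω]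
      have ec : (((univ.erase i₀).card : ℕ) : ℝ) = (n:ℝ) - 1 := by
        rw [card_erase_of_mem (mem_univ i₀), card_univ, Fintype.card_fin,
          Nat.cast_sub hn1, Nat.cast_one]
      rw [Finset.sum_sub_distrib, Finset.sum_add_distrib, e1, Finset.sum_const,
        nsmul_eq_mul, ec, ← Finset.mul_sum, e1]
      have hx0 : x ω i₀ = g ω := by simp only [hxdef, hgdef]
      rw [hx0]
      have hGG : g ω * g ω = g ω := by
        rw [hgdef]; by_cases h0 : ω i₀ = ℓ₀ <;> simp [h0]
      linear_combination 2*hGG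
  -- apply the analysis lemma
  refine aux_half_le p τ hp0 hp1 ?_
  intro ε hε0 hε12
  set f : (Fin n → Fin L) → ℝ := fun ω => 1 + ε * g ω with hfdef
  have hfpos : ∀ ω, 0 < f ω := by
    intro ω
    rw [hfdef, hgdef]
    by_cases h0 : ω i₀ = ℓ₀ <;> simp [h0] <;> linarith
  have key := hτ f hfpos
  have hlogf : ∀ ω, Real.log (f ω) = Real.log (1+ε) * g ω := by
    intro ω
    rw [hfdef, hgdef]
    by_cases h0 : ω i₀ = ℓ₀ <;> simp [h0]
  -- entropy computation
  have hE1 : expect Ω (fun ω => f ω * Real.log (f ω)) = ((1+ε)*Real.log (1+ε)) * p := by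
    have hpt : (fun ω => f ω * Real.log (f ω))
        = fun ω => ((1+ε)*Real.log (1+ε)) * g ω := by
      funext ω
      rw [hlogf ω, hfdef, hgdef]
      by_cases h0 : ω i₀ = ℓ₀ <;> simp [h0] <;> ring
    rw [hpt, expect_const_mul, hgE]
  have hEf : expect Ω f = 1 + ε * p := by
    have h1 := expect_add Ω (fun _ => (1:ℝ)) (fun ω => ε * g ω)
    rw [expect_const hne, expect_const_mul, hgE] at h1
    exact h1
  have hEnt : entropy Ω f = p*((1+ε)*Real.log (1+ε)) - (1+ε*p)*Real.log (1+ε*p) := by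
    unfold entropy
    rw [hE1, hEf]
    ring
  -- dirichlet computation
  have hgradprod : ∀ (a b : Fin n) (ω : Fin n → Fin L),
      grad a b f ω * grad a b (fun x => Real.log (f x)) ω
      = (ε * Real.log (1+ε)) * (grad a b g ω * grad a b g ω) := by
    intro a b ω
    unfold grad
    beta_reduce
    rw [hlogf, hlogf]
    simp only [hfdef]
    ring
  have hDir : dirichlet Ω f (fun ω => Real.log (f ω))
      = ε*Real.log (1+ε)*(p*(1-p)) := by
    unfold dirichlet
    have hterm2 : ∀ q ∈ (univ.filter fun q : Fin n × Fin n => q.1 < q.2),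
        expect Ω (fun ω => grad q.1 q.2 f ω * grad q.1 q.2 (fun x => Real.log (f x)) ω)
        = (ε * Real.log (1+ε)) * expect Ω (fun ω => grad q.1 q.2 g ω * grad q.1 q.2 g ω) := by
      intro q _
      rw [show (fun ω => grad q.1 q.2 f ω * grad q.1 q.2 (fun x => Real.log (f x)) ω)
          = (fun ω => (ε*Real.log (1+ε)) * (grad q.1 q.2 g ω * grad q.1 q.2 g ω))
          from funext (hgradprod q.1 q.2), expect_const_mul]
    rw [Finset.sum_congr rfl hterm2, ← Finset.mul_sum]
    have hgs : ∑ ω ∈ Ω, g ω = p * Ω.card := by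
      have := hgE
      unfold expect at this
      rw [div_eq_iff hC.ne'] at this
      exact this
    have hS : ∑ q ∈ (univ.filter fun q : Fin n × Fin n => q.1 < q.2),
        expect Ω (fun ω => grad q.1 q.2 g ω * grad q.1 q.2 g ω)
        = ((n:ℝ) - 2*k)*p + k := by
      unfold expect
      rw [← Finset.sum_div, Finset.sum_comm, Finset.sum_congr rfl hpoint,
        Finset.sum_add_distrib, Finset.sum_const, ← Finset.mul_sum, nsmul_eq_mul, hgs]
      field_simp
    rw [hS, hpdef]
    have hnne : (n:ℝ) ≠ 0 := by exact_mod_cast hn0.ne'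
    field_simp
    ring
  rw [hEnt, hDir] at key
  exact key


end Multislice
end
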